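/- arXiv:2307.10548 — 3 statements merged into one kernel-verified Lean document; each statement's English description precedes it below -/
import Mathlib

section
/- Let G be a graph, B a PSD forcing set, F a relaxed chronology of PSD forces of B on G, and x ∈ V(G). Then the path bundle Q of F induced by x is a path bundle of F that contains all vertices of B and the vertex x. Moreover, if F is a propagating family of PSD forces, then in the restriction F|_Q at least one force occurs in each time-step until all vertices of the induced subgraph on the bundle are blue. -/
namespace ZF

variable {V : Type*} [Fintype V] [DecidableEq V]

/-- A valid standard zero forcing force within the vertex set `U`, given blue set `B`:
`u` is blue, `v` is its unique white neighbor in `U`. -/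
def ZFValid (G : SimpleGraph V) (U B : Set V) (u v : V) : Prop :=
  u ∈ U ∧ v ∈ U ∧ u ∈ B ∧ v ∉ B ∧ G.Adj u v ∧
    ∀ w ∈ U, G.Adj u w → w ∉ B → w = v

/-- `whiteConn G U B a b` : `a` and `b` are joined by a walk through white
(non-blue) vertices of `U` (possibly trivial). -/
def whiteConn (G : SimpleGraph V) (U B : Set V) : V → V → Prop :=
  Relation.ReflTransGen (fun a b => G.Adj a b ∧ a ∈ U ∧ b ∈ U ∧ a ∉ B ∧ b ∉ B)

/-- A valid PSD force within the vertex set `U`, given blue set `B`: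
`u` is blue and `v` is the unique neighbor of `u` in the component of the
white subgraph containing `v`. -/
def PSDValid (G : SimpleGraph V) (U B : Set V) (u v : V) : Prop :=
  u ∈ U ∧ v ∈ U ∧ u ∈ B ∧ v ∉ B ∧ G.Adj u v ∧
    ∀ w ∈ U, G.Adj u w → w ∉ B → whiteConn G U B v w → w = v

/-- One propagation step for a generic color change rule `valid`. -/
def step (valid : Set V → V → V → Prop) (B : Set V) : Set V :=
  B ∪ {v | ∃ u, valid B u v}

/-- Iterated propagation. -/
def iter (valid : Set V → V → V → Prop) (B : Set V) : ℕ → Set V :=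
  fun k => (step valid)^[k] B

/-- `B ⊆ U` is a forcing set of the induced subgraph on `U` for the rule `valid`. -/
def IsForcingSet (valid : Set V → V → V → Prop) (U B : Set V) : Prop :=
  B ⊆ U ∧ ∃ k, U ⊆ iter valid B k

/-- Propagation time of the set `B` for rule `valid` on the induced subgraph on `U`. -/
noncomputable def propTime (valid : Set V → V → V → Prop) (U B : Set V) : ℕ :=
  sInf {k | U ⊆ iter valid B k}

/-- Vertices blue after `k` time-steps of the family of forces `F`, starting from `B`. -/
def expand (B : Set V) (F : ℕ → Set (V × V)) : ℕ → Set V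
  | 0 => B
  | k + 1 => expand B F k ∪ {v | ∃ u, (u, v) ∈ F (k + 1)}

/-- A relaxed chronology of forces (for the rule `valid`) for the forcing set `B`
on the induced subgraph on `U`, with completion time `K`: at each time-step an
arbitrary subset of the currently valid forces is performed (no vertex being
forced twice in one step), and all of `U` is blue after step `K`. -/
structure RelaxedChron (valid : Set V → V → V → Prop) (U B : Set V)
    (K : ℕ) (F : ℕ → Set (V × V)) : Prop where
  subset : B ⊆ U
  init : F 0 = ∅
  bound : ∀ k, K < k → F k = ∅
  forcesValid : ∀ k < K, ∀ u v, (u, v) ∈ F (k + 1) → valid (expand B F k) u v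
  uniqueForcer : ∀ k u₁ u₂ v, (u₁, v) ∈ F k → (u₂, v) ∈ F k → u₁ = u₂
  complete : U ⊆ expand B F K

/-- The underlying set of forces of a relaxed chronology. -/
def forcesOf (F : ℕ → Set (V × V)) (K : ℕ) : Set (V × V) :=
  {p | ∃ k, 1 ≤ k ∧ k ≤ K ∧ p ∈ F k}

/-- The terminus of a relaxed chronology: the vertices (of `U`) performing no force. -/
def terminus (U : Set V) (F : ℕ → Set (V × V)) (K : ℕ) : Set V :=
  {v ∈ U | ∀ u, (v, u) ∉ forcesOf F K}

/-- The reversal of a relaxed chronology: each force is reversed and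
the order of the time-steps is reversed. -/
def revChron (F : ℕ → Set (V × V)) (K : ℕ) : ℕ → Set (V × V) :=
  fun k => if 1 ≤ k ∧ k ≤ K then {p | (p.2, p.1) ∈ F (K - k + 1)} else ∅

/-- One round of performing all currently valid forces from the set of forces `S`. -/
def forceStep (valid : Set V → V → V → Prop) (S : Set (V × V)) (B : Set V) : Set V :=
  B ∪ {v | ∃ u, (u, v) ∈ S ∧ valid B u v}

def forceIter (valid : Set V → V → V → Prop) (S : Set (V × V)) (B : Set V) : ℕ → Set V :=
  fun t => (forceStep valid S)^[t] B

/-- Propagation time of a set of forces `S` for starting set `B` on `U`. -/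
noncomputable def ptForces (valid : Set V → V → V → Prop) (U : Set V)
    (S : Set (V × V)) (B : Set V) : ℕ :=
  sInf {t | U ⊆ forceIter valid S B t}

/-- `v` is active at time-step `k` of the relaxed chronology `F`:
it is blue after step `k` and has not yet performed a force. -/
def activeAt (B : Set V) (F : ℕ → Set (V × V)) (v : V) (k : ℕ) : Prop :=
  v ∈ expand B F k ∧ ∀ j ≤ k, ∀ u, (v, u) ∉ F j

/-- The zero forcing number. -/
noncomputable def Z (G : SimpleGraph V) : ℕ :=
  sInf {n | ∃ B : Set V, B.ncard = n ∧ IsForcingSet (ZFValid G Set.univ) Set.univ B}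

/-- The PSD forcing number. -/
noncomputable def Zplus (G : SimpleGraph V) : ℕ :=
  sInf {n | ∃ B : Set V, B.ncard = n ∧ IsForcingSet (PSDValid G Set.univ) Set.univ B}

/-- Standard `m`-propagation time `pt(G,m)`. -/
noncomputable def ptm (G : SimpleGraph V) (m : ℕ) : ℕ :=
  sInf {t | ∃ B : Set V, B.ncard = m ∧ IsForcingSet (ZFValid G Set.univ) Set.univ B ∧
    propTime (ZFValid G Set.univ) Set.univ B = t}

/-- PSD `m`-propagation time `pt₊(G,m)`. -/
noncomputable def ptplusm (G : SimpleGraph V) (m : ℕ) : ℕ :=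
  sInf {t | ∃ B : Set V, B.ncard = m ∧ IsForcingSet (PSDValid G Set.univ) Set.univ B ∧
    propTime (PSDValid G Set.univ) Set.univ B = t}

/-- Standard propagation time `pt(G)`. -/
noncomputable def pt (G : SimpleGraph V) : ℕ := ptm G (Z G)

/-- PSD propagation time `pt₊(G)`. -/
noncomputable def ptplus (G : SimpleGraph V) : ℕ := ptplusm G (Zplus G)

/-- PSD throttling number `thr₊(G)`. -/
noncomputable def thrplus (G : SimpleGraph V) : ℕ :=
  sInf {t | ∃ B : Set V, IsForcingSet (PSDValid G Set.univ) Set.univ B ∧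
    t = B.ncard + propTime (PSDValid G Set.univ) Set.univ B}

/-- Closed neighborhood of a set. -/
def closedNbhd (G : SimpleGraph V) (B : Set V) : Set V :=
  B ∪ {v | ∃ u ∈ B, G.Adj u v}

/-- Power domination process: the first step colors the closed neighborhood,
subsequent steps apply the standard zero forcing rule. -/
def pdIter (G : SimpleGraph V) (B : Set V) : ℕ → Set V
  | 0 => B
  | 1 => closedNbhd G B
  | (k + 2) => step (ZFValid G Set.univ) (pdIter G B (k + 1))

/-- `B` is a power dominating set. -/
def IsPDSet (G : SimpleGraph V) (B : Set V) : Prop :=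
  ∃ k, Set.univ ⊆ pdIter G B k

/-- Power propagation time of a set. -/
noncomputable def pdPropTime (G : SimpleGraph V) (B : Set V) : ℕ :=
  sInf {k | Set.univ ⊆ pdIter G B k}

/-- Power `m`-propagation time `ppt(G,m)`. -/
noncomputable def pptm (G : SimpleGraph V) (m : ℕ) : ℕ :=
  sInf {t | ∃ B : Set V, B.ncard = m ∧ IsPDSet G B ∧ pdPropTime G B = t}

/-- Restriction of a family of forces to those with both endpoints in `W`. -/
def restrictF (F : ℕ → Set (V × V)) (W : Set V) : ℕ → Set (V × V) :=
  fun k => {p ∈ F k | p.1 ∈ W ∧ p.2 ∈ W}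

/-- The forcing tree of `b` : all vertices reachable from `b` by a chain of forces in `S`. -/
def treeOf (S : Set (V × V)) (b : V) : Set V :=
  {w | Relation.ReflTransGen (fun a c => (a, c) ∈ S) b w}

open Classical in
/-- The endpoint, after `k` steps, of the path grown from `b ∈ B` in the
path bundle of the relaxed chronology `F` induced by the vertex `x`: the path is
extended by a force from its current endpoint into the component of white
vertices containing `x`, whenever such a force occurs. -/
noncomputable def lastVert (G : SimpleGraph V) (B : Set V) (F : ℕ → Set (V × V))
    (x : V) (b : V) : ℕ → V
  | 0 => b
  | k + 1 =>
    if h : ∃ w, (lastVert G B F x b k, w) ∈ F (k + 1) ∧ x ∉ expand B F k ∧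
        whiteConn G Set.univ (expand B F k) x w
    then h.choose else lastVert G B F x b k

/-- The vertex set of the path bundle of `F` induced by `x`. -/
def bundle (G : SimpleGraph V) (B : Set V) (F : ℕ → Set (V × V)) (x : V) (K : ℕ) : Set V :=
  {v | ∃ b ∈ B, ∃ j ≤ K, lastVert G B F x b j = v}

/-- The path of the bundle grown from `b`, as a list of vertices. -/
noncomputable def bundlePath (G : SimpleGraph V) (B : Set V) (F : ℕ → Set (V × V))
    (x : V) (K : ℕ) (b : V) : List V :=
  ((List.range (K + 1)).map (lastVert G B F x b)).dedup

/-- A nonempty path in `G`, given as a list of distinct consecutively adjacent vertices. -/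
def IsPathList (G : SimpleGraph V) (l : List V) : Prop :=
  l ≠ [] ∧ l.Nodup ∧ l.Chain' G.Adj

/-- `P` is an `(α,β)`-linkage: a collection of pairwise vertex-disjoint paths,
`α` consisting of one endpoint of each path and `β` of the other endpoints. -/
def IsLinkage (G : SimpleGraph V) (α β : Set V) (P : Set (List V)) : Prop :=
  (∀ l ∈ P, IsPathList G l) ∧
  (∀ l ∈ P, ∀ l' ∈ P, l ≠ l' → ∀ v, v ∈ l → v ∉ l') ∧
  (∀ l ∈ P, ∀ l' ∈ P, l.head? = l'.head? → l = l') ∧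
  (∀ l ∈ P, ∀ l' ∈ P, l.getLast? = l'.getLast? → l = l') ∧
  α = {v | ∃ l ∈ P, l.head? = some v} ∧
  β = {v | ∃ l ∈ P, l.getLast? = some v}

/-- `P` is a rigid linkage: for some `α`, `β` it is the unique `(α,β)`-linkage in `G`. -/
def IsRigidLinkage (G : SimpleGraph V) (P : Set (List V)) : Prop :=
  ∃ α β, IsLinkage G α β P ∧ ∀ P', IsLinkage G α β P' → P' = P

/-- A path cover of `G` : `m` vertex-disjoint induced paths covering all vertices,
the `i`-th path having vertices `vtx i 0, …, vtx i (n i − 1)` in path order. -/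
structure IsPathCover (G : SimpleGraph V) (m : ℕ) (n : Fin m → ℕ)
    (vtx : (i : Fin m) → Fin (n i) → V) : Prop where
  pos : ∀ i, 0 < n i
  inj : Function.Injective (fun p : (i : Fin m) × Fin (n i) => vtx p.1 p.2)
  cover : ∀ v : V, ∃ i j, vtx i j = v
  induced : ∀ i (j j' : Fin (n i)),
    G.Adj (vtx i j) (vtx i j') ↔ ((j : ℕ) + 1 = (j' : ℕ) ∨ (j' : ℕ) + 1 = (j : ℕ))

/-- A witness that a path cover is a parallel increasing path cover: a collection of
block partitions of `{0,…,K}`, one per path, compatible with the edges of `G`. -/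
structure IsPIPWitness (G : SimpleGraph V) (m : ℕ) (n : Fin m → ℕ)
    (vtx : (i : Fin m) → Fin (n i) → V) (K : ℕ)
    (A : (i : Fin m) → Fin (n i) → Finset ℕ) : Prop where
  mem : ∀ i j, A i j ⊆ Finset.range (K + 1)
  nonempty : ∀ i j, (A i j).Nonempty
  partition : ∀ i, ∀ x ∈ Finset.range (K + 1), ∃! j, x ∈ A i j
  mono : ∀ i (j j' : Fin (n i)), (j : ℕ) < (j' : ℕ) → ∀ x ∈ A i j, ∀ y ∈ A i j', x < y
  edge : ∀ (i i' : Fin m) j j', i ≠ i' →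
    G.Adj (vtx i j) (vtx i' j') → ((A i j) ∩ (A i' j')).Nonempty

/-- A parallel increasing path cover of `G`. -/
def IsPIP (G : SimpleGraph V) (m : ℕ) (n : Fin m → ℕ)
    (vtx : (i : Fin m) → Fin (n i) → V) : Prop :=
  IsPathCover G m n vtx ∧ ∃ K A, IsPIPWitness G m n vtx K A

/-- The path cover given by `vtx` is the chain set of the family of forces `F` :
the underlying forces are exactly the consecutive pairs along the paths. -/
def IsChainSetOf (m : ℕ) (n : Fin m → ℕ) (vtx : (i : Fin m) → Fin (n i) → V)
    (F : ℕ → Set (V × V)) (K : ℕ) : Prop :=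
  ∀ u w, (u, w) ∈ forcesOf F K ↔
    ∃ (i : Fin m) (j : Fin (n i)) (j' : Fin (n i)),
      u = vtx i j ∧ w = vtx i j' ∧ (j : ℕ) + 1 = (j' : ℕ)

end ZF

set_option linter.unusedSectionVars false

section Aux
open ZF Relation
variable {V : Type*} [Fintype V] [DecidableEq V]
variable {G : SimpleGraph V} {B : Set V} {F : ℕ → Set (V × V)} {x : V} {K : ℕ}

lemma expand_zero : expand B F 0 = B := rfl

lemma expand_succ (k : ℕ) :
    expand B F (k + 1) = expand B F k ∪ {v | ∃ u, (u, v) ∈ F (k + 1)} := rfl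

lemma expand_mono {j k : ℕ} (h : j ≤ k) : expand B F j ⊆ expand B F k := by
  induction h with
  | refl => exact subset_rfl
  | step _ ih => exact ih.trans (by rw [expand_succ]; exact Set.subset_union_left)

lemma whiteConn_anti {U C₁ C₂ : Set V} (h : C₁ ⊆ C₂) {a b : V}
    (hc : whiteConn G U C₂ a b) : whiteConn G U C₁ a b :=
  ReflTransGen.mono (p := fun a b => G.Adj a b ∧ a ∈ U ∧ b ∈ U ∧ a ∉ C₁ ∧ b ∉ C₁) (fun _ _ hr =>
    ⟨hr.1, hr.2.1, hr.2.2.1, fun hu => hr.2.2.2.1 (h hu), fun hv => hr.2.2.2.2 (h hv)⟩) _ _ hc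

lemma whiteConn_symm {U C : Set V} {a b : V} (hc : whiteConn G U C a b) :
    whiteConn G U C b a := by
  induction hc with
  | refl => exact .refl
  | tail _ h ih => exact .head ⟨h.1.symm, h.2.2.1, h.2.1, h.2.2.2.2, h.2.2.2.1⟩ ih

lemma whiteConn_white {U C : Set V} {a b : V} (hc : whiteConn G U C a b)
    (ha : a ∉ C) : b ∉ C := by
  induction hc with
  | refl => exact ha
  | tail _ h _ => exact h.2.2.2.2

open Classical in
lemma lastVert_succ (b : V) (k : ℕ) :
    lastVert G B F x b (k + 1) =
      if h : ∃ w, (lastVert G B F x b k, w) ∈ F (k + 1) ∧ x ∉ expand B F k ∧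
          whiteConn G Set.univ (expand B F k) x w
      then h.choose else lastVert G B F x b k := by
  rw [ZF.lastVert]

lemma lastVert_spec {b : V} {k : ℕ}
    (h : ∃ w, (lastVert G B F x b k, w) ∈ F (k + 1) ∧ x ∉ expand B F k ∧
        whiteConn G Set.univ (expand B F k) x w) :
    (lastVert G B F x b k, lastVert G B F x b (k + 1)) ∈ F (k + 1) ∧
      x ∉ expand B F k ∧
      whiteConn G Set.univ (expand B F k) x (lastVert G B F x b (k + 1)) := by
  rw [lastVert_succ, dif_pos h]
  exact h.choose_spec

lemma lastVert_spec_ne {b : V} {k : ℕ}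
    (h : lastVert G B F x b (k + 1) ≠ lastVert G B F x b k) :
    (lastVert G B F x b k, lastVert G B F x b (k + 1)) ∈ F (k + 1) ∧
      x ∉ expand B F k ∧
      whiteConn G Set.univ (expand B F k) x (lastVert G B F x b (k + 1)) := by
  by_cases hc : ∃ w, (lastVert G B F x b k, w) ∈ F (k + 1) ∧ x ∉ expand B F k ∧
      whiteConn G Set.univ (expand B F k) x w
  · exact lastVert_spec hc
  · exact absurd (by rw [lastVert_succ, dif_neg hc]) h

lemma lastVert_mem_expand {b : V} (hb : b ∈ B) (k : ℕ) :
    lastVert G B F x b k ∈ expand B F k := by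
  induction k with
  | zero => exact hb
  | succ k ih =>
    by_cases h : lastVert G B F x b (k + 1) = lastVert G B F x b k
    · rw [h]; exact expand_mono (Nat.le_succ k) ih
    · rw [expand_succ]
      exact Or.inr ⟨_, (lastVert_spec_ne h).1⟩

lemma B_subset_bundle : B ⊆ bundle G B F x K :=
  fun b hb => ⟨b, hb, 0, Nat.zero_le K, rfl⟩

/-- Key invariant: every blue vertex with a neighbor in the white component of `x`
is the current endpoint of one of the paths of the bundle. -/
lemma bundle_inv (hF : RelaxedChron (PSDValid G Set.univ) Set.univ B K F) :
    ∀ k u, u ∈ expand B F k → x ∉ expand B F k →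
      (∃ w, G.Adj u w ∧ whiteConn G Set.univ (expand B F k) x w) →
      ∃ b ∈ B, lastVert G B F x b k = u := by
  intro k
  induction k with
  | zero => exact fun u hu _ _ => ⟨u, hu, rfl⟩
  | succ k ih =>
    rintro u hu hx ⟨w, hadj, hconn⟩
    have hsub : expand B F k ⊆ expand B F (k + 1) := expand_mono (Nat.le_succ k)
    have hxk : x ∉ expand B F k := fun h => hx (hsub h)
    have hw1 : w ∉ expand B F (k + 1) := whiteConn_white hconn hx
    have hwk : w ∉ expand B F k := fun h => hw1 (hsub h)
    have hconnk : whiteConn G Set.univ (expand B F k) x w := whiteConn_anti hsub hconn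
    by_cases hu' : u ∈ expand B F k
    · obtain ⟨b, hb, hlast⟩ := ih u hu' hxk ⟨w, hadj, hconnk⟩
      refine ⟨b, hb, ?_⟩
      have hno : ¬ ∃ w'', (lastVert G B F x b k, w'') ∈ F (k + 1) ∧ x ∉ expand B F k ∧
          whiteConn G Set.univ (expand B F k) x w'' := by
        rintro ⟨w'', hw''F, -, hw''conn⟩
        rcases Nat.lt_or_ge k K with hkK | hkK
        · have hval := hF.forcesValid k hkK _ _ hw''F
          rw [hlast] at hval hw''F
          have hww : w = w'' := hval.2.2.2.2.2 w (Set.mem_univ w) hadj hwk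
            ((whiteConn_symm hw''conn).trans hconnk)
          have : w'' ∈ expand B F (k + 1) := by
            rw [expand_succ]; exact Or.inr ⟨u, hw''F⟩
          rw [← hww] at this
          exact hw1 this
        · rw [hF.bound _ (Nat.lt_succ_of_le hkK)] at hw''F; exact hw''F
      rw [lastVert_succ, dif_neg hno, hlast]
    · obtain ⟨u₁, hu₁⟩ : ∃ u₁, (u₁, u) ∈ F (k + 1) := by
        rw [expand_succ] at hu; exact hu.resolve_left hu'
      have hkK : k < K := by
        by_contra hk
        rw [hF.bound _ (Nat.lt_succ_of_le (Nat.le_of_not_lt hk))] at hu₁; exact hu₁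
      have hval := hF.forcesValid k hkK _ _ hu₁
      obtain ⟨-, -, hu₁blue, huwhite, hadj₁, huniq⟩ := hval
      have hconnu : whiteConn G Set.univ (expand B F k) x u :=
        hconnk.tail ⟨hadj.symm, Set.mem_univ _, Set.mem_univ _, hwk, hu'⟩
      obtain ⟨b, hb, hlast⟩ := ih u₁ hu₁blue hxk ⟨u, hadj₁, hconnu⟩
      have hex : ∃ w₀, (lastVert G B F x b k, w₀) ∈ F (k + 1) ∧ x ∉ expand B F k ∧
          whiteConn G Set.univ (expand B F k) x w₀ :=
        ⟨u, by rw [hlast]; exact hu₁, hxk, hconnu⟩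
      obtain ⟨hsF, -, hsconn⟩ := lastVert_spec hex
      rw [hlast] at hsF
      have hval2 := hF.forcesValid k hkK _ _ hsF
      exact ⟨b, hb, huniq _ (Set.mem_univ _) hval2.2.2.2.2.1 hval2.2.2.2.1
        ((whiteConn_symm hconnu).trans hsconn)⟩

lemma x_mem_bundle (hF : RelaxedChron (PSDValid G Set.univ) Set.univ B K F) :
    x ∈ bundle G B F x K := by
  by_cases hxB : x ∈ B
  · exact ⟨x, hxB, 0, Nat.zero_le K, rfl⟩
  · have hxK : x ∈ expand B F K := hF.complete (Set.mem_univ x)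
    have hne : (setOf fun k => x ∈ expand B F k).Nonempty := ⟨K, hxK⟩
    have hmS := Nat.sInf_mem hne
    obtain ⟨k, hk⟩ : ∃ k, sInf (setOf fun k => x ∈ expand B F k) = k + 1 := by
      have h0 : sInf (setOf fun k => x ∈ expand B F k) ≠ 0 := by
        intro h; rw [h] at hmS; exact hxB hmS
      exact ⟨sInf (setOf fun k => x ∈ expand B F k) - 1, by omega⟩
    have hxmem : x ∈ expand B F (k + 1) := by rw [← hk]; exact hmS
    have hxnot : x ∉ expand B F k := fun h => by
      have hkS : k ∈ setOf fun n => x ∈ expand B F n := h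
      have := Nat.sInf_le hkS; omega
    have hkK : k + 1 ≤ K := by
      have hKS : K ∈ setOf fun n => x ∈ expand B F n := hxK
      have := Nat.sInf_le hKS; omega
    obtain ⟨u, hu⟩ : ∃ u, (u, x) ∈ F (k + 1) := by
      rw [expand_succ] at hxmem; exact hxmem.resolve_left hxnot
    have hval := hF.forcesValid k (by omega) u x hu
    obtain ⟨b, hb, hlast⟩ := bundle_inv hF k u hval.2.2.1 hxnot
      ⟨x, hval.2.2.2.2.1, ReflTransGen.refl⟩
    have hex : ∃ w₀, (lastVert G B F x b k, w₀) ∈ F (k + 1) ∧ x ∉ expand B F k ∧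
        whiteConn G Set.univ (expand B F k) x w₀ :=
      ⟨x, by rw [hlast]; exact hu, hxnot, ReflTransGen.refl⟩
    obtain ⟨hsF, -, hsconn⟩ := lastVert_spec hex
    rw [hlast] at hsF
    have hval2 := hF.forcesValid k (by omega) _ _ hsF
    exact ⟨b, hb, k + 1, hkK,
      hval.2.2.2.2.2 _ (Set.mem_univ _) hval2.2.2.2.2.1 hval2.2.2.2.1 hsconn⟩

lemma lastVert_mem_tree {b : V} : ∀ j, j ≤ K →
    lastVert G B F x b j ∈ treeOf (forcesOf F K) b := by
  intro j
  induction j with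
  | zero => exact fun _ => ReflTransGen.refl
  | succ j ih =>
    intro hj
    by_cases h : lastVert G B F x b (j + 1) = lastVert G B F x b j
    · rw [h]; exact ih (Nat.le_of_succ_le hj)
    · exact (ih (Nat.le_of_succ_le hj)).tail
        ⟨j + 1, Nat.succ_le_succ (Nat.zero_le j), hj, (lastVert_spec_ne h).1⟩

lemma lastVert_mem_expand' {b : V} (hb : b ∈ B) : ∀ j, j ≤ K →
    lastVert G B F x b j ∈ expand B (restrictF F (bundle G B F x K)) j := by
  intro j
  induction j with
  | zero => exact fun _ => hb
  | succ j ih =>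
    intro hj
    by_cases h : lastVert G B F x b (j + 1) = lastVert G B F x b j
    · rw [h]; exact expand_mono (Nat.le_succ j) (ih (Nat.le_of_succ_le hj))
    · rw [expand_succ]
      exact Or.inr ⟨_, (lastVert_spec_ne h).1,
        ⟨b, hb, j, Nat.le_of_succ_le hj, rfl⟩, ⟨b, hb, j + 1, hj, rfl⟩⟩

lemma bundle_white (hF : RelaxedChron (PSDValid G Set.univ) Set.univ B K F)
    {v : V} {k : ℕ} (hv : v ∈ bundle G B F x K) (hvk : v ∉ expand B F k) :
    x ∉ expand B F k ∧ whiteConn G Set.univ (expand B F k) x v := by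
  obtain ⟨b, hb, j, hj, hlv⟩ := hv
  have hne : (setOf fun m => lastVert G B F x b m = v).Nonempty := ⟨j, hlv⟩
  have hmS := Nat.sInf_mem hne
  obtain ⟨m, hm⟩ : ∃ m, sInf (setOf fun m => lastVert G B F x b m = v) = m + 1 := by
    have h0 : sInf (setOf fun m => lastVert G B F x b m = v) ≠ 0 := by
      intro h; rw [h] at hmS
      exact hvk (expand_mono (Nat.zero_le k) (show v ∈ expand B F 0 from hmS ▸ hb))
    exact ⟨sInf (setOf fun m => lastVert G B F x b m = v) - 1, by omega⟩
  rw [hm] at hmS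
  have hprev : lastVert G B F x b m ≠ v := by
    intro h
    have hm' : m ∈ setOf fun m => lastVert G B F x b m = v := h
    have := Nat.sInf_le hm'; omega
  have hne' : lastVert G B F x b (m + 1) ≠ lastVert G B F x b m := by
    rw [hmS]; exact fun he => hprev he.symm
  obtain ⟨hFm, hxm, hconn⟩ := lastVert_spec_ne hne'
  rw [hmS] at hconn
  have hkm : k ≤ m := by
    by_contra h
    have hvm : v ∈ expand B F (m + 1) := by
      have := lastVert_mem_expand (G := G) (F := F) (x := x) hb (m + 1)
      rwa [hmS] at this
    exact hvk (expand_mono (by omega : m + 1 ≤ k) hvm)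
  exact ⟨fun h => hxm (expand_mono hkm h), whiteConn_anti (expand_mono hkm) hconn⟩

lemma bundle_blue (hF : RelaxedChron (PSDValid G Set.univ) Set.univ B K F)
    {v : V} {k : ℕ} (hv : v ∈ bundle G B F x K) (hvk : v ∈ expand B F k) :
    v ∈ expand B (restrictF F (bundle G B F x K)) k := by
  obtain ⟨b, hb, j, hj, hlv⟩ := hv
  have hne : (setOf fun m => lastVert G B F x b m = v).Nonempty := ⟨j, hlv⟩
  have hmS := Nat.sInf_mem hne
  have hmK : sInf (setOf fun m => lastVert G B F x b m = v) ≤ K :=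
    le_trans (Nat.sInf_le hlv) hj
  have h1 : v ∈ expand B (restrictF F (bundle G B F x K))
      (sInf (setOf fun m => lastVert G B F x b m = v)) := by
    have := lastVert_mem_expand' (G := G) (F := F) (x := x) hb _ hmK
    rwa [hmS] at this
  rcases le_or_gt (sInf (setOf fun m => lastVert G B F x b m = v)) k with h | h
  · exact expand_mono h h1
  · exfalso
    obtain ⟨m, hm⟩ : ∃ m, sInf (setOf fun m => lastVert G B F x b m = v) = m + 1 :=
      ⟨sInf (setOf fun m => lastVert G B F x b m = v) - 1, by omega⟩
    rw [hm] at hmS hmK h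
    have hprev : lastVert G B F x b m ≠ v := by
      intro h'
      have hm' : m ∈ setOf fun m => lastVert G B F x b m = v := h'
      have := Nat.sInf_le hm'; omega
    have hne' : lastVert G B F x b (m + 1) ≠ lastVert G B F x b m := by
      rw [hmS]; exact fun he => hprev he.symm
    obtain ⟨hFm, -, -⟩ := lastVert_spec_ne hne'
    have hval := hF.forcesValid m (by omega) _ _ hFm
    rw [hmS] at hval
    exact hval.2.2.2.1 (expand_mono (by omega : k ≤ m) hvk)

lemma expand_restrict (hF : RelaxedChron (PSDValid G Set.univ) Set.univ B K F)
    (k : ℕ) :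
    expand B (restrictF F (bundle G B F x K)) k = bundle G B F x K ∩ expand B F k := by
  apply Set.Subset.antisymm
  · induction k with
    | zero => exact fun v hv => ⟨B_subset_bundle hv, hv⟩
    | succ k ih =>
      rw [expand_succ, expand_succ]
      rintro v (hv | ⟨u, hmem, hu, hvQ⟩)
      · obtain ⟨h1, h2⟩ := ih hv
        exact ⟨h1, Or.inl h2⟩
      · exact ⟨hvQ, Or.inr ⟨u, hmem⟩⟩
  · rintro v ⟨hvQ, hvk⟩
    exact bundle_blue hF hvQ hvk

end Aux
/-- The path bundle of a relaxed chronology of PSD forces induced by a vertex `x` is a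
path bundle (each path lies inside the corresponding forcing tree and the restriction of
`F` to the bundle is a relaxed chronology of standard forces for `B`) containing `B` and
`x`; moreover, if `F` is a propagating family, at least one force of the restriction
occurs in each time-step until the bundle is entirely blue. -/
theorem bundle_isPathBundle {V : Type*} [Fintype V] [DecidableEq V]
    (G : SimpleGraph V) (B : Set V) (K : ℕ) (F : ℕ → Set (V × V))
    (hB : ZF.IsForcingSet (ZF.PSDValid G Set.univ) Set.univ B)
    (hF : ZF.RelaxedChron (ZF.PSDValid G Set.univ) Set.univ B K F) (x : V) :
    B ⊆ ZF.bundle G B F x K ∧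
    x ∈ ZF.bundle G B F x K ∧
    (∀ b ∈ B, ∀ j ≤ K, ZF.lastVert G B F x b j ∈ ZF.treeOf (ZF.forcesOf F K) b) ∧
    ZF.RelaxedChron (ZF.ZFValid G (ZF.bundle G B F x K)) (ZF.bundle G B F x K) B K
      (ZF.restrictF F (ZF.bundle G B F x K)) ∧
    ((∀ k < K, ∀ u v, ZF.PSDValid G Set.univ (ZF.expand B F k) u v →
        ∃ u', (u', v) ∈ F (k + 1)) →
      ∀ k < K, ¬ ZF.bundle G B F x K ⊆
          ZF.expand B (ZF.restrictF F (ZF.bundle G B F x K)) k →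
        ∃ p, p ∈ ZF.restrictF F (ZF.bundle G B F x K) (k + 1)) := by
    classical
  refine ⟨B_subset_bundle, x_mem_bundle hF, fun b _ j hj => lastVert_mem_tree j hj, ?_, ?_⟩
  · refine ⟨B_subset_bundle, ?_, ?_, ?_, ?_, ?_⟩
    · refine Set.eq_empty_iff_forall_notMem.mpr fun p hp => ?_
      have h1 := hp.1
      rw [hF.init] at h1
      exact h1
    · intro k hk
      refine Set.eq_empty_iff_forall_notMem.mpr fun p hp => ?_
      have h1 := hp.1
      rw [hF.bound k hk] at h1
      exact h1
    · intro k hk u v huv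
      obtain ⟨hmem, hu, hv⟩ := huv
      have hval := hF.forcesValid k hk u v hmem
      rw [expand_restrict hF k]
      refine ⟨hu, hv, ⟨hu, hval.2.2.1⟩, fun h => hval.2.2.2.1 h.2, hval.2.2.2.2.1, ?_⟩
      intro w hwQ hadj hwnot
      have hwwhite : w ∉ ZF.expand B F k := fun h => hwnot ⟨hwQ, h⟩
      obtain ⟨-, hconnw⟩ := bundle_white hF hwQ hwwhite
      obtain ⟨-, hconnv⟩ := bundle_white hF hv hval.2.2.2.1
      exact hval.2.2.2.2.2 w (Set.mem_univ w) hadj hwwhite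
        ((whiteConn_symm hconnv).trans hconnw)
    · exact fun k u₁ u₂ v h1 h2 => hF.uniqueForcer k u₁ u₂ v h1.1 h2.1
    · intro v hv
      rw [expand_restrict hF K]
      exact ⟨hv, hF.complete (Set.mem_univ v)⟩
  · intro hyp k hk hnotsub
    obtain ⟨v, hvQ, hvnot⟩ := Set.not_subset.mp hnotsub
    have hvwhite : v ∉ ZF.expand B F k := fun h => hvnot (by
      rw [expand_restrict hF k]; exact ⟨hvQ, h⟩)
    obtain ⟨hxk, -⟩ := bundle_white hF hvQ hvwhite
    have hKS : K ∈ setOf (fun t => ∃ w, ZF.whiteConn G Set.univ (ZF.expand B F k) x w ∧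
        w ∈ ZF.expand B F t) :=
      ⟨x, Relation.ReflTransGen.refl, hF.complete (Set.mem_univ x)⟩
    have hne : (setOf fun t => ∃ w, ZF.whiteConn G Set.univ (ZF.expand B F k) x w ∧
        w ∈ ZF.expand B F t).Nonempty := ⟨K, hKS⟩
    have hmS := Nat.sInf_mem hne
    have hnotS : ∀ s, s < sInf (setOf fun t => ∃ w,
          ZF.whiteConn G Set.univ (ZF.expand B F k) x w ∧ w ∈ ZF.expand B F t) →
        ¬ ∃ w, ZF.whiteConn G Set.univ (ZF.expand B F k) x w ∧ w ∈ ZF.expand B F s :=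
      fun s hs => Nat.notMem_of_lt_sInf hs
    obtain ⟨t, ht⟩ : ∃ t, sInf (setOf fun t => ∃ w,
        ZF.whiteConn G Set.univ (ZF.expand B F k) x w ∧ w ∈ ZF.expand B F t) = t + 1 := by
      have h0 : sInf (setOf fun t => ∃ w,
          ZF.whiteConn G Set.univ (ZF.expand B F k) x w ∧ w ∈ ZF.expand B F t) ≠ 0 := by
        intro h
        rw [h] at hmS
        obtain ⟨w, hwc, hw0⟩ := hmS
        exact (whiteConn_white hwc hxk) (expand_mono (Nat.zero_le k) hw0)
      exact ⟨sInf (setOf fun t => ∃ w,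
        ZF.whiteConn G Set.univ (ZF.expand B F k) x w ∧ w ∈ ZF.expand B F t) - 1, by omega⟩
    rw [ht] at hmS
    obtain ⟨w, hwc, hwt1⟩ := hmS
    have hconn_all : ∀ z, ZF.whiteConn G Set.univ (ZF.expand B F k) x z →
        z ∉ ZF.expand B F t := fun z hz h => hnotS t (by omega) ⟨z, hz, h⟩
    have hwt : w ∉ ZF.expand B F t := hconn_all w hwc
    obtain ⟨u, huF⟩ : ∃ u, (u, w) ∈ F (t + 1) := by
      rw [expand_succ] at hwt1; exact hwt1.resolve_left hwt
    have htK : t < K := by have := Nat.sInf_le hKS; omega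
    have hvalt := hF.forcesValid t htK u w huF
    have hwk : w ∉ ZF.expand B F k := whiteConn_white hwc hxk
    have huk : u ∈ ZF.expand B F k := by
      by_contra h
      exact hconn_all u (hwc.tail ⟨hvalt.2.2.2.2.1.symm, Set.mem_univ _, Set.mem_univ _,
        hwk, h⟩) hvalt.2.2.1
    have hvalk : ZF.PSDValid G Set.univ (ZF.expand B F k) u w := by
      refine ⟨Set.mem_univ _, Set.mem_univ _, huk, hwk, hvalt.2.2.2.2.1, ?_⟩
      intro w₂ hw₂u hadj₂ hw₂k hcon₂
      have key : ZF.whiteConn G Set.univ (ZF.expand B F t) w w₂ := by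
        clear hadj₂ hw₂k hw₂u
        induction hcon₂ with
        | refl => exact Relation.ReflTransGen.refl
        | tail hwc' hcz ih =>
          exact ih.tail ⟨hcz.1, Set.mem_univ _, Set.mem_univ _,
            hconn_all _ (hwc.trans hwc'), hconn_all _ (hwc.trans (hwc'.tail hcz))⟩
      exact hvalt.2.2.2.2.2 w₂ (Set.mem_univ _) hadj₂
        (hconn_all w₂ (hwc.trans hcon₂)) key
    obtain ⟨u', hu'F⟩ := hyp k hk u w hvalk
    have hvalk' := hF.forcesValid k hk u' w hu'F
    obtain ⟨b, hb, hlast⟩ := bundle_inv hF k u' hvalk'.2.2.1 hxk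
      ⟨w, hvalk'.2.2.2.2.1, hwc⟩
    have hex : ∃ w₀, (ZF.lastVert G B F x b k, w₀) ∈ F (k + 1) ∧ x ∉ ZF.expand B F k ∧
        ZF.whiteConn G Set.univ (ZF.expand B F k) x w₀ :=
      ⟨w, by rw [hlast]; exact hu'F, hxk, hwc⟩
    obtain ⟨hsF, -, -⟩ := lastVert_spec hex
    exact ⟨(ZF.lastVert G B F x b k, ZF.lastVert G B F x b (k + 1)), hsF,
      ⟨b, hb, k, le_of_lt hk, rfl⟩, ⟨b, hb, k + 1, hk, rfl⟩⟩
end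

section
/- Let G be a graph, B a PSD forcing set of size k, and F a propagating family of PSD forces for B on G. For every vertex x of G, if H is the induced subgraph on the vertices of the path bundle of F induced by x, then pt(H,B) ≤ pt₊(G,B); moreover, if x is among the last vertices to be forced (x ∈ B^(pt₊(G,B))), then pt₊(G,B) ≤ |V(H)| − k. -/
namespace ZF

variable {V : Type*} [Fintype V] [DecidableEq V]

section Aux

variable {V : Type*} [Fintype V] [DecidableEq V]
variable {G : SimpleGraph V} {B : Set V} {K : ℕ} {F : ℕ → Set (V × V)}

lemma expand_mono (B : Set V) (F : ℕ → Set (V × V)) : Monotone (expand B F) :=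
  monotone_nat_of_le_succ fun _ => Set.subset_union_left

lemma expand_succ (B : Set V) (F : ℕ → Set (V × V)) (k : ℕ) :
    expand B F (k + 1) = expand B F k ∪ {v | ∃ u, (u, v) ∈ F (k + 1)} := rfl

lemma whiteConn_mono {U B₁ B₂ : Set V} (h : B₁ ⊆ B₂) {a b : V}
    (hw : whiteConn G U B₂ a b) : whiteConn G U B₁ a b :=
  Relation.ReflTransGen.mono
    (fun _ _ hr => ⟨hr.1, hr.2.1, hr.2.2.1, fun hc => hr.2.2.2.1 (h hc),
      fun hc => hr.2.2.2.2 (h hc)⟩) _ _ hw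

lemma whiteConn_symm {U Bs : Set V} {a b : V} (h : whiteConn G U Bs a b) :
    whiteConn G U Bs b a :=
  by
    unfold whiteConn at h ⊢
    haveI : Std.Symm (fun a b : V => G.Adj a b ∧ a ∈ U ∧ b ∈ U ∧ a ∉ Bs ∧ b ∉ Bs) :=
      ⟨fun _ _ hr => ⟨hr.1.symm, hr.2.2.1, hr.2.1, hr.2.2.2.2, hr.2.2.2.1⟩⟩
    exact Relation.ReflTransGen.stdSymm.symm _ _ h

lemma whiteConn_not_mem {U Bs : Set V} {a b : V}
    (h : whiteConn G U Bs a b) (ha : a ∉ Bs) : b ∉ Bs := by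
  rcases Relation.ReflTransGen.cases_tail h with h | ⟨c, _, hr⟩
  · subst h; exact ha
  · exact hr.2.2.2.2

lemma whiteConn_upgrade {B₁ B₂ : Set V} {x a b : V}
    (hW : ∀ z, whiteConn G Set.univ B₁ x z → z ∉ B₂)
    (hxa : whiteConn G Set.univ B₁ x a) (hab : whiteConn G Set.univ B₁ a b) :
    whiteConn G Set.univ B₂ a b := by
  induction hab with
  | refl => exact Relation.ReflTransGen.refl
  | tail h1 h2 ih =>
    exact ih.tail ⟨h2.1, trivial, trivial, hW _ (hxa.trans h1),
      hW _ ((hxa.trans h1).tail h2)⟩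

lemma mem_expand_origin {u : V} :
    ∀ {k}, u ∈ expand B F k →
      u ∈ B ∨ ∃ i, i < k ∧ (∃ u', (u', u) ∈ F (i + 1)) ∧ u ∉ expand B F i := by
  intro k
  induction k with
  | zero => exact fun h => Or.inl h
  | succ k ih =>
    intro h
    rcases h with h | h
    · rcases ih h with h | ⟨i, hi, h'⟩
      · exact Or.inl h
      · exact Or.inr ⟨i, Nat.lt_succ_of_lt hi, h'⟩
    · by_cases hk : u ∈ expand B F k
      · rcases ih hk with h' | ⟨i, hi, h'⟩
        · exact Or.inl h'
        · exact Or.inr ⟨i, Nat.lt_succ_of_lt hi, h'⟩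
      · exact Or.inr ⟨k, Nat.lt_succ_self k, h, hk⟩

lemma force_unique (hF : RelaxedChron (PSDValid G Set.univ) Set.univ B K F)
    {x u w₁ w₂ : V} {j k : ℕ} (hjk : j ≤ k) (hk : k < K)
    (h1 : (u, w₁) ∈ F (j + 1)) (hc1 : whiteConn G Set.univ (expand B F j) x w₁)
    (h2 : (u, w₂) ∈ F (k + 1)) (hc2 : whiteConn G Set.univ (expand B F k) x w₂) :
    w₁ = w₂ ∧ j = k := by
  have hval1 := hF.forcesValid j (lt_of_le_of_lt hjk hk) u w₁ h1
  have hval2 := hF.forcesValid k hk u w₂ h2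
  have hw2j : w₂ ∉ expand B F j := fun h => hval2.2.2.2.1 (expand_mono B F hjk h)
  have hc2j : whiteConn G Set.univ (expand B F j) x w₂ :=
    whiteConn_mono (expand_mono B F hjk) hc2
  have heq : w₂ = w₁ :=
    hval1.2.2.2.2.2 w₂ trivial hval2.2.2.2.2.1 hw2j ((whiteConn_symm hc1).trans hc2j)
  refine ⟨heq.symm, ?_⟩
  by_contra hne
  have hlt : j + 1 ≤ k := by omega
  have hmem : w₁ ∈ expand B F k :=
    expand_mono B F hlt (Or.inr ⟨u, h1⟩)
  rw [← heq] at hmem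
  exact hval2.2.2.2.1 hmem

lemma not_mem_bound (hF : RelaxedChron (PSDValid G Set.univ) Set.univ B K F)
    {k : ℕ} (hk : K < k) {p : V × V} (hp : p ∈ F k) : False := by
  rw [hF.bound k hk] at hp
  exact hp

lemma lastVert_zero {x b : V} : lastVert G B F x b 0 = b := by
  rw [lastVert]

lemma lastVert_succ_pos {x b : V} {k : ℕ}
    (h : ∃ w, (lastVert G B F x b k, w) ∈ F (k + 1) ∧ x ∉ expand B F k ∧
      whiteConn G Set.univ (expand B F k) x w) :
    lastVert G B F x b (k + 1) = h.choose := by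
  rw [lastVert, dif_pos h]

lemma lastVert_succ_neg {x b : V} {k : ℕ}
    (h : ¬ ∃ w, (lastVert G B F x b k, w) ∈ F (k + 1) ∧ x ∉ expand B F k ∧
      whiteConn G Set.univ (expand B F k) x w) :
    lastVert G B F x b (k + 1) = lastVert G B F x b k := by
  rw [lastVert, dif_neg h]

lemma lastVert_step (hF : RelaxedChron (PSDValid G Set.univ) Set.univ B K F)
    {x b u w : V} {k : ℕ} (hk : k < K)
    (hu : lastVert G B F x b k = u) (hw : (u, w) ∈ F (k + 1))
    (hxk : x ∉ expand B F k) (hcw : whiteConn G Set.univ (expand B F k) x w) :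
    lastVert G B F x b (k + 1) = w := by
  have h : ∃ w', (lastVert G B F x b k, w') ∈ F (k + 1) ∧ x ∉ expand B F k ∧
      whiteConn G Set.univ (expand B F k) x w' := ⟨w, by rw [hu]; exact hw, hxk, hcw⟩
  rw [lastVert_succ_pos h]
  obtain ⟨hm, -, hc⟩ := h.choose_spec
  have hm' : (u, h.choose) ∈ F (k + 1) := by rw [← hu]; exact hm
  exact (force_unique hF le_rfl hk hm' hc hw hcw).1

lemma lastVert_stays (hF : RelaxedChron (PSDValid G Set.univ) Set.univ B K F)
    {x b u w : V} {t k : ℕ} (hk : k < K)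
    (hw : (u, w) ∈ F (k + 1)) (hcw : whiteConn G Set.univ (expand B F k) x w) :
    ∀ j, t ≤ j → j ≤ k → lastVert G B F x b t = u → lastVert G B F x b j = u := by
  intro j
  induction j with
  | zero => intro h1 _ h3; rw [Nat.le_zero] at h1; rw [← h1]; exact h3
  | succ j ih =>
    intro h1 h2 h3
    rcases Nat.eq_or_lt_of_le h1 with he | hlt
    · rw [← he]; exact h3
    · have hj : lastVert G B F x b j = u := ih (by omega) (by omega) h3
      rcases em (∃ w', (lastVert G B F x b j, w') ∈ F (j + 1) ∧ x ∉ expand B F j ∧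
          whiteConn G Set.univ (expand B F j) x w') with h | h
      · exfalso
        obtain ⟨hm, -, hc⟩ := h.choose_spec
        have hm' : (u, h.choose) ∈ F (j + 1) := by rw [← hj]; exact hm
        have := (force_unique hF (by omega : j ≤ k) hk hm' hc hw hcw).2
        omega
      · rw [lastVert_succ_neg h]; exact hj

lemma force_from_endpoint (hF : RelaxedChron (PSDValid G Set.univ) Set.univ B K F)
    {x : V} (hx : ∀ j < K, x ∉ expand B F j) :
    ∀ k, k < K → ∀ u w, (u, w) ∈ F (k + 1) →
      whiteConn G Set.univ (expand B F k) x w →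
      ∃ b ∈ B, lastVert G B F x b (k + 1) = w := by
  intro k
  induction k using Nat.strong_induction_on with
  | _ k ih =>
    intro hk u w hw hcw
    have hval := hF.forcesValid k hk u w hw
    rcases mem_expand_origin hval.2.2.1 with hu | ⟨i, hik, ⟨u', hu'⟩, hui⟩
    · refine ⟨u, hu, ?_⟩
      have hst : lastVert G B F x u k = u :=
        lastVert_stays hF hk hw hcw k (Nat.zero_le k) le_rfl lastVert_zero
      exact lastVert_step hF hk hst hw (hx k hk) hcw
    · have hiK : i < K := lt_trans hik hk
      have hwEk : w ∉ expand B F k := hval.2.2.2.1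
      have hwEi : w ∉ expand B F i := fun h => hwEk (expand_mono B F hik.le h)
      have hcwi : whiteConn G Set.univ (expand B F i) x w :=
        whiteConn_mono (expand_mono B F hik.le) hcw
      have hcui : whiteConn G Set.univ (expand B F i) x u :=
        hcwi.tail ⟨hval.2.2.2.2.1.symm, trivial, trivial, hwEi, hui⟩
      obtain ⟨b, hb, hbl⟩ := ih i hik hiK u' u hu' hcui
      refine ⟨b, hb, ?_⟩
      have hst : lastVert G B F x b k = u :=
        lastVert_stays hF hk hw hcw k (by omega) le_rfl hbl
      exact lastVert_step hF hk hst hw (hx k hk) hcw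

lemma lastVert_cases (hF : RelaxedChron (PSDValid G Set.univ) Set.univ B K F)
    {x b : V} (k : ℕ) :
    ∀ j, (∃ i, i ≤ k ∧ lastVert G B F x b i = lastVert G B F x b j) ∨
      (lastVert G B F x b j ∉ expand B F k ∧
        whiteConn G Set.univ (expand B F k) x (lastVert G B F x b j)) := by
  intro j
  induction j with
  | zero => exact Or.inl ⟨0, Nat.zero_le _, rfl⟩
  | succ j ihj =>
    rcases em (∃ w, (lastVert G B F x b j, w) ∈ F (j + 1) ∧ x ∉ expand B F j ∧
        whiteConn G Set.univ (expand B F j) x w) with h | h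
    · have heq : lastVert G B F x b (j + 1) = h.choose := lastVert_succ_pos h
      obtain ⟨hmem, hxj, hwc⟩ := h.choose_spec
      by_cases hjk : j + 1 ≤ k
      · exact Or.inl ⟨j + 1, hjk, rfl⟩
      · have hkj : k ≤ j := by omega
        have hjK : j < K := by
          by_contra hc
          exact not_mem_bound hF (by omega) hmem
        have hval := hF.forcesValid j hjK _ _ hmem
        refine Or.inr ⟨?_, ?_⟩
        · rw [heq]; exact fun hh => hval.2.2.2.1 (expand_mono B F hkj hh)
        · rw [heq]; exact whiteConn_mono (expand_mono B F hkj) hwc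
    · rw [lastVert_succ_neg h]; exact ihj

lemma lastVert_mem_bundle {x b : V} (hb : b ∈ B) {j : ℕ} (hj : j ≤ K) :
    lastVert G B F x b j ∈ bundle G B F x K := ⟨b, hb, j, hj, rfl⟩

lemma iter_mono (valid : Set V → V → V → Prop) (Bs : Set V) :
    Monotone (iter valid Bs) := by
  apply monotone_nat_of_le_succ
  intro k
  rw [iter, iter, Function.iterate_succ_apply']
  exact Set.subset_union_left

lemma bundle_iter (hF : RelaxedChron (PSDValid G Set.univ) Set.univ B K F) {x : V} :
    ∀ k, k ≤ K → ∀ b ∈ B, ∀ j ≤ k,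
      lastVert G B F x b j ∈ iter (ZFValid G (bundle G B F x K)) B k := by
  intro k
  induction k with
  | zero =>
    intro _ b hb j hj
    rw [Nat.le_zero] at hj
    subst hj
    rw [lastVert_zero]
    exact hb
  | succ k ihk =>
    intro hk1 b hb j hj
    have hsub : iter (ZFValid G (bundle G B F x K)) B k ⊆
        iter (ZFValid G (bundle G B F x K)) B (k + 1) := iter_mono _ _ (Nat.le_succ k)
    rcases Nat.lt_or_ge j (k + 1) with hjk | hjk
    · exact hsub (ihk (by omega) b hb j (by omega))
    · have hj' : j = k + 1 := le_antisymm hj hjk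
      subst hj'
      rcases em (∃ w', (lastVert G B F x b k, w') ∈ F (k + 1) ∧ x ∉ expand B F k ∧
          whiteConn G Set.univ (expand B F k) x w') with h | h
      · obtain ⟨hm, hxk, hc⟩ := h.choose_spec
        have heq : lastVert G B F x b (k + 1) = h.choose := lastVert_succ_pos h
        have hkK : k < K := by
          by_contra hc'
          exact not_mem_bound hF (by omega) hm
        have hval := hF.forcesValid k hkK _ _ hm
        rw [heq]
        by_cases hwC : h.choose ∈ iter (ZFValid G (bundle G B F x K)) B k
        · exact hsub hwC
        · rw [iter, Function.iterate_succ_apply']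
          refine Or.inr ⟨lastVert G B F x b k, lastVert_mem_bundle hb (by omega),
            heq ▸ lastVert_mem_bundle hb hk1, ihk (by omega) b hb k le_rfl, hwC,
            hval.2.2.2.2.1, ?_⟩
          intro z hzU hadj hzC
          obtain ⟨b', hb', j', hj', rfl⟩ := hzU
          rcases lastVert_cases hF (x := x) (b := b') k j' with ⟨i, hik, hEq⟩ | ⟨hzE, hzc⟩
          · exact absurd (hEq ▸ ihk (by omega) b' hb' i hik) hzC
          · exact hval.2.2.2.2.2 _ trivial hadj hzE ((whiteConn_symm hc).trans hzc)
      · rw [lastVert_succ_neg h]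
        exact hsub (ihk (by omega) b hb k le_rfl)

lemma exists_force_into_comp (hF : RelaxedChron (PSDValid G Set.univ) Set.univ B K F)
    (hprop : ∀ k < K, ∀ u v, PSDValid G Set.univ (expand B F k) u v →
      ∃ u', (u', v) ∈ F (k + 1))
    {x : V} {k : ℕ} (hk : k < K) (hx : ∀ j < K, x ∉ expand B F j) :
    ∃ u v, (u, v) ∈ F (k + 1) ∧ whiteConn G Set.univ (expand B F k) x v := by
  classical
  have hwhite : ∀ v, whiteConn G Set.univ (expand B F k) x v → v ∉ expand B F k :=
    fun v hv => whiteConn_not_mem hv (hx k hk)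
  have hQK : ∃ n, ∃ v, whiteConn G Set.univ (expand B F k) x v ∧ v ∈ expand B F n :=
    ⟨K, x, Relation.ReflTransGen.refl, hF.complete trivial⟩
  have hfle : Nat.find hQK ≤ K :=
    Nat.find_min' hQK ⟨x, Relation.ReflTransGen.refl, hF.complete trivial⟩
  have hkf : k < Nat.find hQK := by
    by_contra h
    push_neg at h
    obtain ⟨v, hvc, hvE⟩ := Nat.find_spec hQK
    exact hwhite v hvc (expand_mono B F h hvE)
  set m := Nat.find hQK - 1 with hm
  have hfm : Nat.find hQK = m + 1 := by omega
  have hQm : ¬ ∃ v, whiteConn G Set.univ (expand B F k) x v ∧ v ∈ expand B F m :=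
    Nat.find_min hQK (by omega)
  have hspec := Nat.find_spec hQK
  rw [hfm] at hspec
  obtain ⟨v, hvc, hvE⟩ := hspec
  have hvm : v ∉ expand B F m := fun h => hQm ⟨v, hvc, h⟩
  have hmK : m < K := by omega
  have hkm : k ≤ m := by omega
  rcases hvE with hvE | ⟨u, hu⟩
  · exact absurd hvE hvm
  have hval := hF.forcesValid m hmK u v hu
  have hvk : v ∉ expand B F k := hwhite v hvc
  have huk : u ∈ expand B F k := by
    by_contra huk
    have hcu : whiteConn G Set.univ (expand B F k) x u :=
      hvc.tail ⟨hval.2.2.2.2.1.symm, trivial, trivial, hvk, huk⟩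
    exact hQm ⟨u, hcu, hval.2.2.1⟩
  have hWm : ∀ z, whiteConn G Set.univ (expand B F k) x z → z ∉ expand B F m :=
    fun z hz hzm => hQm ⟨z, hz, hzm⟩
  have hpsd : PSDValid G Set.univ (expand B F k) u v := by
    refine ⟨trivial, trivial, huk, hvk, hval.2.2.2.2.1, ?_⟩
    intro z _ hadj hzk hvz
    have hxz : whiteConn G Set.univ (expand B F k) x z := hvc.trans hvz
    have hvzm : whiteConn G Set.univ (expand B F m) v z := whiteConn_upgrade hWm hvc hvz
    exact hval.2.2.2.2.2 z trivial hadj (hWm z hxz) hvzm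
  obtain ⟨u', hu'⟩ := hprop k hk u v hpsd
  exact ⟨u', v, hu', hvc⟩

end Aux

end ZF
/-- For a propagating family of PSD forces for `B` and any vertex `x`, the standard
propagation time of `B` on the induced subgraph `H` on the path bundle induced by `x`
is at most `pt₊(G,B)`; moreover, if `x` is forced only at the last time-step, then
`pt₊(G,B) ≤ |V(H)| − |B|`. -/
theorem bundle_pt_bounds {V : Type*} [Fintype V] [DecidableEq V]
    (G : SimpleGraph V) (B : Set V) (K : ℕ) (F : ℕ → Set (V × V))
    (hB : ZF.IsForcingSet (ZF.PSDValid G Set.univ) Set.univ B)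
    (hF : ZF.RelaxedChron (ZF.PSDValid G Set.univ) Set.univ B K F)
    (hprop : ∀ k < K, ∀ u v, ZF.PSDValid G Set.univ (ZF.expand B F k) u v →
      ∃ u', (u', v) ∈ F (k + 1))
    (hK : K = ZF.propTime (ZF.PSDValid G Set.univ) Set.univ B) (x : V) :
    (ZF.IsForcingSet (ZF.ZFValid G (ZF.bundle G B F x K)) (ZF.bundle G B F x K) B ∧
      ZF.propTime (ZF.ZFValid G (ZF.bundle G B F x K)) (ZF.bundle G B F x K) B
        ≤ ZF.propTime (ZF.PSDValid G Set.univ) Set.univ B) ∧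
    ((∀ j < K, x ∉ ZF.expand B F j) →
      ZF.propTime (ZF.PSDValid G Set.univ) Set.univ B
        ≤ (ZF.bundle G B F x K).ncard - B.ncard) := by
  classical
  have hBU : B ⊆ ZF.bundle G B F x K :=
    fun b hb => ⟨b, hb, 0, Nat.zero_le _, ZF.lastVert_zero⟩
  have hUiter : ZF.bundle G B F x K ⊆
      ZF.iter (ZF.ZFValid G (ZF.bundle G B F x K)) B K := by
    rintro z ⟨b, hb, j, hj, rfl⟩
    exact ZF.bundle_iter hF K le_rfl b hb j hj
  constructor
  · refine ⟨⟨hBU, K, hUiter⟩, ?_⟩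
    rw [← hK]
    exact Nat.sInf_le hUiter
  · intro hx
    rw [← hK]
    have hnew : ∀ k, k < K → ∃ v, v ∈ ZF.bundle G B F x K ∧
        v ∈ ZF.expand B F (k + 1) ∧ v ∉ ZF.expand B F k := by
      intro k hk
      obtain ⟨u, v, huv, hcv⟩ := ZF.exists_force_into_comp hF hprop hk hx
      obtain ⟨b, hb, hbl⟩ := ZF.force_from_endpoint hF hx k hk u v huv hcv
      have hval := hF.forcesValid k hk u v huv
      exact ⟨v, hbl ▸ ZF.lastVert_mem_bundle hb (by omega), Or.inr ⟨u, huv⟩,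
        hval.2.2.2.1⟩
    rcases Nat.eq_zero_or_pos K with hK0 | hKpos
    · rw [hK0]; exact Nat.zero_le _
    have hV : Nonempty V := ⟨(hnew 0 hKpos).choose⟩
    choose! f hfU hfE hfE' using hnew
    have key : ∀ a b, a < K → b < K → a < b → f a ≠ f b := by
      intro a b ha hb hab heq
      have h1 : f a ∈ ZF.expand B F (a + 1) := hfE a ha
      have h2 : f b ∉ ZF.expand B F b := hfE' b hb
      rw [heq] at h1
      exact h2 (ZF.expand_mono B F (by omega : a + 1 ≤ b) h1)
    have hinj : Set.InjOn f ↑(Finset.range K) := by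
      intro a ha b hb hab
      simp only [Finset.coe_range, Set.mem_Iio] at ha hb
      rcases Nat.lt_trichotomy a b with h | h | h
      · exact absurd hab (key a b ha hb h)
      · exact h
      · exact absurd hab.symm (key b a hb ha h)
    have hsub2 : ↑((Finset.range K).image f) ⊆ (ZF.bundle G B F x K \ B : Set V) := by
      intro v hv
      simp only [Finset.coe_image, Set.mem_image, Finset.coe_range, Set.mem_Iio] at hv
      obtain ⟨k, hkK, rfl⟩ := hv
      refine ⟨hfU k hkK, fun hB' => hfE' k hkK (ZF.expand_mono B F (Nat.zero_le k) hB')⟩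
    have hcard : K ≤ (ZF.bundle G B F x K \ B : Set V).ncard := by
      have h1 : ((Finset.range K).image f).card = K := by
        rw [Finset.card_image_of_injOn hinj, Finset.card_range]
      calc K = (↑((Finset.range K).image f) : Set V).ncard := by
              rw [Set.ncard_coe_finset, h1]
        _ ≤ _ := Set.ncard_le_ncard hsub2 (Set.toFinite _)
    rw [← Set.ncard_diff hBU (Set.toFinite _)]
    exact hcard
end

section
/- Let G be a graph, B a PSD forcing set of G, F a relaxed chronology of PSD forces for B, x ∈ V(G), and Q the path bundle of F induced by x. Then the terminus of F|_Q (the set consisting of the last vertex of each path in Q) is a PSD forcing set of G, and a relaxed chronology of PSD forces for it is obtained by reversing the forces between vertices of Q and preserving all remaining forces of F. -/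
set_option linter.unusedSectionVars false
set_option maxHeartbeats 1000000

namespace BundleProof
open ZF

variable {V : Type*} [Fintype V] [DecidableEq V]
variable {G : SimpleGraph V} {B : Set V} {K : ℕ} {F : ℕ → Set (V × V)} {x : V}

open Classical in
noncomputable def lvStep (G : SimpleGraph V) (B : Set V) (F : ℕ → Set (V × V))
    (x : V) (k : ℕ) (v : V) : V :=
  if h : ∃ w, (v, w) ∈ F (k + 1) ∧ x ∉ expand B F k ∧
      whiteConn G Set.univ (expand B F k) x w
  then h.choose else v

lemma lastVert_zero (b : V) : lastVert G B F x b 0 = b := rfl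

lemma lastVert_succ (b : V) (k : ℕ) :
    lastVert G B F x b (k+1) = lvStep G B F x k (lastVert G B F x b k) := rfl

/-! ### expand basics -/

lemma expand_zero : expand B F 0 = B := rfl

lemma expand_succ (k : ℕ) :
    expand B F (k+1) = expand B F k ∪ {v | ∃ u, (u, v) ∈ F (k + 1)} := rfl

lemma expand_le_succ (k : ℕ) : expand B F k ⊆ expand B F (k+1) := by
  rw [expand_succ]; exact Set.subset_union_left

lemma expand_mono {j k : ℕ} (h : j ≤ k) : expand B F j ⊆ expand B F k := by
  induction k with
  | zero => simpa [Nat.le_zero.mp h]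
  | succ n ih =>
    rcases Nat.lt_or_ge j (n+1) with h' | h'
    · exact (ih (Nat.lt_succ_iff.mp h')).trans (expand_le_succ n)
    · have : j = n+1 := le_antisymm h h'
      subst this; rfl

lemma B_subset_expand (k : ℕ) : B ⊆ expand B F k := expand_mono (Nat.zero_le k)

lemma target_mem_expand {u v : V} {k : ℕ} (h : (u, v) ∈ F (k+1)) :
    v ∈ expand B F (k+1) := by
  rw [expand_succ]; exact Or.inr ⟨u, h⟩

/-! ### whiteConn basics -/

lemma wc_mono {U B1 B2 : Set V} (h : B1 ⊆ B2) {a b : V}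
    (hc : whiteConn G U B2 a b) : whiteConn G U B1 a b :=
  Relation.ReflTransGen.mono
    (fun _ _ ⟨h1, h2, h3, h4, h5⟩ => ⟨h1, h2, h3, fun hx => h4 (h hx), fun hx => h5 (h hx)⟩) _ _ hc

lemma wc_symm {U B0 : Set V} {a b : V} (hc : whiteConn G U B0 a b) :
    whiteConn G U B0 b a :=
  (@Relation.ReflTransGen.symmetric V (fun a b => G.Adj a b ∧ a ∈ U ∧ b ∈ U ∧ a ∉ B0 ∧ b ∉ B0)
    ⟨fun _ _ ⟨h1, h2, h3, h4, h5⟩ => ⟨h1.symm, h3, h2, h5, h4⟩⟩).symm _ _ hc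

lemma wc_trans {U B0 : Set V} {a b c : V} (h1 : whiteConn G U B0 a b)
    (h2 : whiteConn G U B0 b c) : whiteConn G U B0 a c :=
  Relation.ReflTransGen.trans h1 h2

lemma wc_tail {B0 : Set V} {a b c : V} (h1 : whiteConn G Set.univ B0 a b)
    (hadj : G.Adj b c) (hb : b ∉ B0) (hc : c ∉ B0) :
    whiteConn G Set.univ B0 a c :=
  Relation.ReflTransGen.tail h1 ⟨hadj, trivial, trivial, hb, hc⟩

/-! ### chronology basics -/

section chron
variable (hF : RelaxedChron (PSDValid G Set.univ) Set.univ B K F)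
include hF

lemma mem_F_range {u v : V} {k : ℕ} (h : (u, v) ∈ F k) : 1 ≤ k ∧ k ≤ K := by
  constructor
  · by_contra hk
    push_neg at hk
    interval_cases k
    · rw [hF.init] at h; exact h
  · by_contra hk
    push_neg at hk
    rw [hF.bound k hk] at h; exact h

lemma mem_F_valid {u v : V} {k : ℕ} (h : (u, v) ∈ F k) :
    PSDValid G Set.univ (expand B F (k-1)) u v := by
  obtain ⟨h1, h2⟩ := mem_F_range hF h
  have hk : k - 1 + 1 = k := Nat.succ_pred_eq_of_pos h1
  have := hF.forcesValid (k-1) (by omega) u v (by rw [hk]; exact h)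
  exact this

lemma source_mem {u v : V} {k : ℕ} (h : (u, v) ∈ F k) : u ∈ expand B F (k-1) :=
  (mem_F_valid hF h).2.2.1

lemma target_not_mem {u v : V} {k : ℕ} (h : (u, v) ∈ F k) : v ∉ expand B F (k-1) :=
  (mem_F_valid hF h).2.2.2.1

lemma force_adj {u v : V} {k : ℕ} (h : (u, v) ∈ F k) : G.Adj u v :=
  (mem_F_valid hF h).2.2.2.2.1

lemma force_uniq {u v : V} {k : ℕ} (h : (u, v) ∈ F k) :
    ∀ w, G.Adj u w → w ∉ expand B F (k-1) →
      whiteConn G Set.univ (expand B F (k-1)) v w → w = v := by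
  intro w hadj hw hc
  exact (mem_F_valid hF h).2.2.2.2.2 w trivial hadj hw hc

lemma force_time_unique {u u' v : V} {k k' : ℕ} (h : (u, v) ∈ F k) (h' : (u', v) ∈ F k') :
    k = k' ∧ u = u' := by
  obtain ⟨hk1, hk2⟩ := mem_F_range hF h
  obtain ⟨hk1', hk2'⟩ := mem_F_range hF h'
  have hkk : k = k' := by
    by_contra hne
    rcases Nat.lt_or_ge k k' with hlt | hge
    · exact target_not_mem hF h'
        (expand_mono (by omega) (target_mem_expand (k := k-1) (by rwa [Nat.sub_add_cancel hk1])))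
    · have hlt : k' < k := by omega
      exact target_not_mem hF h
        (expand_mono (by omega) (target_mem_expand (k := k'-1) (by rwa [Nat.sub_add_cancel hk1'])))
  subst hkk
  exact ⟨rfl, hF.uniqueForcer k u u' v h h'⟩

lemma mem_expand_forced {v : V} {r : ℕ} (hv : v ∈ expand B F r) (hvB : v ∉ B) :
    ∃ k, 1 ≤ k ∧ k ≤ r ∧ ∃ u, (u, v) ∈ F k := by
  induction r with
  | zero => exact absurd hv hvB
  | succ n ih =>
    rw [expand_succ] at hv
    rcases hv with hv | ⟨u, hu⟩
    · obtain ⟨k, h1, h2, h3⟩ := ih hv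
      exact ⟨k, h1, by omega, h3⟩
    · exact ⟨n+1, by omega, le_refl _, u, hu⟩

end chron

end BundleProof
namespace BundleProof
open ZF

variable {V : Type*} [Fintype V] [DecidableEq V]
variable {G : SimpleGraph V} {B : Set V} {K : ℕ} {F : ℕ → Set (V × V)} {x : V}

/-- tail of the bundle: vertices that are a path endpoint at some time in `[s, K]`. -/
def Tail (G : SimpleGraph V) (B : Set V) (F : ℕ → Set (V × V)) (x : V) (K s : ℕ) : Set V :=
  {v | ∃ b ∈ B, ∃ j, s ≤ j ∧ j ≤ K ∧ lastVert G B F x b j = v}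

lemma bundle_eq_Tail0 : bundle G B F x K = Tail G B F x K 0 := by
  ext v
  constructor
  · rintro ⟨b, hb, j, hj, he⟩; exact ⟨b, hb, j, Nat.zero_le _, hj, he⟩
  · rintro ⟨b, hb, j, _, hj, he⟩; exact ⟨b, hb, j, hj, he⟩

lemma Tail_anti {s s' : ℕ} (h : s ≤ s') : Tail G B F x K s' ⊆ Tail G B F x K s := by
  rintro v ⟨b, hb, j, h1, h2, h3⟩; exact ⟨b, hb, j, h.trans h1, h2, h3⟩

lemma mem_bundle_of_lastVert {b : V} (hb : b ∈ B) {j : ℕ} (hj : j ≤ K) :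
    lastVert G B F x b j ∈ bundle G B F x K := ⟨b, hb, j, hj, rfl⟩

lemma B_subset_bundle : B ⊆ bundle G B F x K := fun b hb => ⟨b, hb, 0, Nat.zero_le _, rfl⟩

/-- spec of lastVert at a successor step -/
lemma lastVert_spec (b : V) (k : ℕ) :
    lastVert G B F x b (k+1) = lastVert G B F x b k ∨
    ((lastVert G B F x b k, lastVert G B F x b (k+1)) ∈ F (k+1) ∧ x ∉ expand B F k ∧
      whiteConn G Set.univ (expand B F k) x (lastVert G B F x b (k+1))) := by
  rw [lastVert_succ, lvStep]
  split
  · next h =>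
    right
    exact h.choose_spec
  · exact Or.inl rfl

/-- if the path moves, the spec holds -/
lemma lastVert_move {b : V} {k : ℕ} (h : lastVert G B F x b (k+1) ≠ lastVert G B F x b k) :
    (lastVert G B F x b k, lastVert G B F x b (k+1)) ∈ F (k+1) ∧ x ∉ expand B F k ∧
      whiteConn G Set.univ (expand B F k) x (lastVert G B F x b (k+1)) :=
  (lastVert_spec b k).resolve_left h

/-- every vertex of the bundle has a minimal, fresh occurrence -/
lemma exists_fresh_min {b : V} {j : ℕ} {v : V} (hj : lastVert G B F x b j = v) :
    ∃ f, f ≤ j ∧ lastVert G B F x b f = v ∧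
      (f = 0 ∨ lastVert G B F x b f ≠ lastVert G B F x b (f-1)) := by
  classical
  have hex : ∃ n, lastVert G B F x b n = v := ⟨j, hj⟩
  refine ⟨Nat.find hex, Nat.find_min' hex hj, Nat.find_spec hex, ?_⟩
  rcases Nat.eq_zero_or_pos (Nat.find hex) with h0 | hpos
  · exact Or.inl h0
  · right
    rw [Nat.find_spec hex]
    intro heq
    exact Nat.find_min hex (show Nat.find hex - 1 < Nat.find hex by omega) heq.symm


section chron
variable (hF : RelaxedChron (PSDValid G Set.univ) Set.univ B K F)
include hF

lemma lastVert_mem_expand {b : V} (hb : b ∈ B) (k : ℕ) :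
    lastVert G B F x b k ∈ expand B F k := by
  induction k with
  | zero => exact hb
  | succ n ih =>
    rcases lastVert_spec (G := G) (F := F) (x := x) b n with h | h
    · rw [h]; exact expand_le_succ n ih
    · exact target_mem_expand h.1

/-- once the path moves away from a vertex it never returns -/
lemma lastVert_no_return {b : V} (hb : b ∈ B) {k : ℕ}
    (h : lastVert G B F x b (k+1) ≠ lastVert G B F x b k) :
    ∀ j, k+1 ≤ j → lastVert G B F x b j ≠ lastVert G B F x b k := by
  intro j hj
  induction j with
  | zero => omega
  | succ n ih =>
    rcases Nat.lt_or_ge k n with hlt | hge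
    · rcases lastVert_spec (G := G) (F := F) (x := x) b n with hs | hs
      · rw [hs]; exact ih (by omega)
      · intro heq
        have h1 : lastVert G B F x b k ∈ expand B F k := lastVert_mem_expand hF hb k
        have h2 := target_not_mem hF hs.1
        simp only [Nat.add_sub_cancel] at h2
        rw [heq] at h2
        exact h2 (expand_mono (by omega) h1)
    · have : n = k := by omega
      subst this; exact h

/-- a fresh (just-forced) occurrence of a vertex on a path -/
lemma lastVert_fresh_force {b : V} {k : ℕ} (hk : 1 ≤ k)
    (h : lastVert G B F x b k ≠ lastVert G B F x b (k-1)) :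
    (lastVert G B F x b (k-1), lastVert G B F x b k) ∈ F k ∧ x ∉ expand B F (k-1) ∧
      whiteConn G Set.univ (expand B F (k-1)) x (lastVert G B F x b k) := by
  have hkk : k - 1 + 1 = k := Nat.sub_add_cancel hk
  have := lastVert_move (G := G) (B := B) (F := F) (x := x) (b := b) (k := k-1)
    (by rw [hkk]; exact h)
  rwa [hkk] at this

/-- Lemma D: fresh occurrences are unique across the bundle -/
lemma fresh_unique : ∀ k : ℕ, ∀ b b' : V, ∀ k' : ℕ, b ∈ B → b' ∈ B →
    (k = 0 ∨ lastVert G B F x b k ≠ lastVert G B F x b (k-1)) →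
    (k' = 0 ∨ lastVert G B F x b' k' ≠ lastVert G B F x b' (k'-1)) →
    lastVert G B F x b k = lastVert G B F x b' k' → b = b' ∧ k = k' := by
  intro k
  induction k using Nat.strong_induction_on with
  | _ k IH =>
  intro b b' k' hb hb' hfk hfk' heq
  rcases hfk with rfl | hfk
  · rcases hfk' with rfl | hfk'
    · exact ⟨heq, rfl⟩
    · have hk' : 1 ≤ k' := by
        rcases Nat.eq_zero_or_pos k' with h0 | h; · subst h0; simp at hfk'
        · exact h
      obtain ⟨hf, -, -⟩ := lastVert_fresh_force hF hk' hfk'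
      have := target_not_mem hF hf
      rw [← heq] at this
      exact absurd (B_subset_expand (k'-1) hb) this
  · have hk : 1 ≤ k := by
      rcases Nat.eq_zero_or_pos k with h0 | h; · subst h0; simp at hfk
      · exact h
    obtain ⟨hf, -, -⟩ := lastVert_fresh_force hF hk hfk
    rcases hfk' with rfl | hfk'
    · have := target_not_mem hF hf
      rw [heq] at this
      exact absurd (B_subset_expand (k-1) hb') this
    · have hk' : 1 ≤ k' := by
        rcases Nat.eq_zero_or_pos k' with h0 | h; · subst h0; simp at hfk'
        · exact h
      obtain ⟨hf', -, -⟩ := lastVert_fresh_force hF hk' hfk'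
      rw [heq] at hf
      obtain ⟨hkk, huu⟩ := force_time_unique hF hf hf'
      subst hkk
      -- forcers are equal
      have hu : lastVert G B F x b (k-1) = lastVert G B F x b' (k-1) := huu
      obtain ⟨f, hfle, hfv, hffresh⟩ := exists_fresh_min (G := G)
        (b := b) (j := k-1) (v := lastVert G B F x b (k-1)) rfl
      obtain ⟨f', hfle', hfv', hffresh'⟩ := exists_fresh_min (G := G)
        (b := b') (j := k-1) (v := lastVert G B F x b' (k-1)) rfl
      have : b = b' ∧ f = f' := by
        apply IH f (by omega) b b' f' hb hb' hffresh hffresh'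
        rw [hfv, hfv', hu]
      exact ⟨this.1, rfl⟩

end chron
end BundleProof
namespace BundleProof
open ZF

variable {V : Type*} [Fintype V] [DecidableEq V]
variable {G : SimpleGraph V} {B : Set V} {K : ℕ} {F : ℕ → Set (V × V)} {x : V}

/-- last occurrence of a vertex on a path below a time where it is absent -/
lemma last_app {b u : V} {c f : ℕ} (hfc : f ≤ c) (hf : lastVert G B F x b f = u)
    (hc : lastVert G B F x b c ≠ u) :
    ∃ j, j + 1 ≤ c ∧ lastVert G B F x b j = u ∧ lastVert G B F x b (j+1) ≠ u := by
  classical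
  have hd : DecidablePred (fun n => lastVert G B F x b n = u) := Classical.decPred _
  have hspec : lastVert G B F x b (Nat.findGreatest (fun n => lastVert G B F x b n = u) c) = u :=
    Nat.findGreatest_spec (P := fun n => lastVert G B F x b n = u) hfc hf
  have hle : Nat.findGreatest (fun n => lastVert G B F x b n = u) c ≤ c := Nat.findGreatest_le c
  have hne : Nat.findGreatest (fun n => lastVert G B F x b n = u) c ≠ c := by
    intro h; rw [h] at hspec; exact hc hspec
  refine ⟨Nat.findGreatest (fun n => lastVert G B F x b n = u) c, by omega, hspec, ?_⟩
  exact Nat.findGreatest_is_greatest (k := Nat.findGreatest (fun n => lastVert G B F x b n = u) c + 1)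
    (Nat.lt_succ_self _) (by omega)

section chron
variable (hF : RelaxedChron (PSDValid G Set.univ) Set.univ B K F)
include hF

/-- if the path of `b` moves at step `j+1`, then the new endpoint is the unique
neighbor of the old endpoint among white vertices connected to `x`. -/
lemma move_uniq {b : V} (hb : b ∈ B) {j : ℕ}
    (hmv : lastVert G B F x b (j+1) ≠ lastVert G B F x b j) {z : V}
    (hz : G.Adj (lastVert G B F x b j) z) (hzE : z ∉ expand B F j)
    (hzc : whiteConn G Set.univ (expand B F j) x z) : z = lastVert G B F x b (j+1) := by
  obtain ⟨hforce, hxj, hconn⟩ := lastVert_move hmv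
  have := force_uniq hF hforce z hz
  simp only [Nat.add_sub_cancel] at this
  exact this hzE (wc_trans (wc_symm hconn) hzc)

/-- case analysis on bundle membership relative to time `s` -/
lemma bundle_cases {v : V} (hv : v ∈ bundle G B F x K) (s : ℕ) :
    v ∈ expand B F (s-1) ∨ v ∈ Tail G B F x K s := by
  obtain ⟨b, hb, j, hjK, hej⟩ := hv
  obtain ⟨f, hfj, hfv, -⟩ := exists_fresh_min (G := G) hej
  rcases le_or_gt s f with hsf | hfs
  · exact Or.inr ⟨b, hb, f, hsf, by omega, hfv⟩
  · left
    rw [← hfv]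
    exact expand_mono (by omega) (lastVert_mem_expand hF hb f)

/-- the source of a bundle move is not in the tail -/
lemma source_not_tail {b : V} (hb : b ∈ B) {s : ℕ} (hs1 : 1 ≤ s)
    (hmv : lastVert G B F x b s ≠ lastVert G B F x b (s-1)) :
    lastVert G B F x b (s-1) ∉ Tail G B F x K s := by
  rintro ⟨b'', hb'', j, hjs, hjK, hej⟩
  obtain ⟨f, hfle, hfv, hffresh⟩ := exists_fresh_min (G := G)
    (b := b) (j := s-1) (v := lastVert G B F x b (s-1)) rfl
  obtain ⟨f'', hfle'', hfv'', hffresh''⟩ := exists_fresh_min (G := G) hej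
  obtain ⟨hbb, hff⟩ := fresh_unique hF f b b'' f'' hb hb'' hffresh hffresh''
    (by rw [hfv, hfv''])
  subst hbb
  have hnr := lastVert_no_return hF hb (k := s - 1)
    (by rw [Nat.sub_add_cancel hs1]; exact hmv) j (by omega)
  exact hnr hej

/-- Lemma U: any force whose target lies in the bundle is a bundle path force. -/
lemma lemU {u v : V} {k : ℕ} (h : (u, v) ∈ F k) (hvQ : v ∈ bundle G B F x K) :
    ∃ b ∈ B, lastVert G B F x b (k-1) = u ∧ lastVert G B F x b k = v ∧
      lastVert G B F x b k ≠ lastVert G B F x b (k-1) := by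
  obtain ⟨b, hb, j, hjK, hej⟩ := hvQ
  obtain ⟨f, hfj, hfv, hfresh⟩ := exists_fresh_min (G := G) hej
  have hf1 : 1 ≤ f := by
    rcases Nat.eq_zero_or_pos f with h0 | h1
    · exfalso
      subst h0
      rw [lastVert_zero] at hfv
      subst hfv
      exact target_not_mem hF h (B_subset_expand _ hb)
    · exact h1
  have hfr : lastVert G B F x b f ≠ lastVert G B F x b (f-1) := by
    rcases hfresh with h0 | hne; · omega
    · exact hne
  obtain ⟨hforce, -, -⟩ := lastVert_fresh_force hF hf1 hfr
  rw [hfv] at hforce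
  obtain ⟨hkf, hu⟩ := force_time_unique hF h hforce
  subst hkf
  exact ⟨b, hb, hu.symm, hfv, hfr⟩

/-- Lemma A: any vertex forced while white-connected to `x` belongs to the bundle. -/
lemma lemA : ∀ k : ℕ, ∀ u v : V, (u, v) ∈ F k → x ∉ expand B F (k-1) →
    whiteConn G Set.univ (expand B F (k-1)) x v → v ∈ bundle G B F x K := by
  intro k
  induction k using Nat.strong_induction_on with
  | _ k IH =>
  intro u v h hx hconn
  obtain ⟨hk1, hkK⟩ := mem_F_range hF h
  by_cases hcur : ∃ b ∈ B, lastVert G B F x b (k-1) = u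
  · obtain ⟨b, hb, hcu⟩ := hcur
    have hex : ∃ w, (lastVert G B F x b (k-1), w) ∈ F ((k-1) + 1) ∧
        x ∉ expand B F (k-1) ∧ whiteConn G Set.univ (expand B F (k-1)) x w :=
      ⟨v, by rw [hcu, Nat.sub_add_cancel hk1]; exact h, hx, hconn⟩
    have hek : lastVert G B F x b ((k-1)+1) = lvStep G B F x (k-1) (lastVert G B F x b (k-1)) :=
      lastVert_succ b (k-1)
    rw [lvStep, dif_pos hex] at hek
    have hw : ∃ w0, lastVert G B F x b ((k-1)+1) = w0 ∧
        (lastVert G B F x b (k-1), w0) ∈ F ((k-1)+1) ∧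
        whiteConn G Set.univ (expand B F (k-1)) x w0 :=
      ⟨hex.choose, hek, hex.choose_spec.1, hex.choose_spec.2.2⟩
    obtain ⟨w0, he0, h01, h03⟩ := hw
    rw [hcu, Nat.sub_add_cancel hk1] at h01
    have hv : v = w0 := by
      have := force_uniq hF h01 v (force_adj hF h)
      exact this (target_not_mem hF h) (wc_trans (wc_symm h03) hconn)
    have hvv : v = lastVert G B F x b ((k-1)+1) := by rw [hv, ← he0]
    rw [hvv]
    exact mem_bundle_of_lastVert hb (by omega)
  · push_neg at hcur
    by_cases hQ : u ∈ bundle G B F x K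
    · exfalso
      obtain ⟨b, hb, j, hjK, hej⟩ := hQ
      obtain ⟨f, hfj, hfv, hfresh⟩ := exists_fresh_min (G := G) hej
      have hfk : f ≤ k - 1 := by
        by_contra hgt
        push_neg at hgt
        have hf1 : 1 ≤ f := by omega
        have hfr : lastVert G B F x b f ≠ lastVert G B F x b (f-1) := by
          rcases hfresh with h0 | hne; · omega
          · exact hne
        obtain ⟨hforce, -, -⟩ := lastVert_fresh_force hF hf1 hfr
        have := target_not_mem hF hforce
        rw [hfv] at this
        exact this (expand_mono (by omega) (source_mem hF h))
      obtain ⟨j', hj'c, hj'v, hj'ne⟩ := last_app (G := G) hfk hfv (hcur b hb)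
      have hmv : lastVert G B F x b (j'+1) ≠ lastVert G B F x b j' := by
        rw [hj'v]; exact hj'ne
      have hv := move_uniq hF hb hmv (z := v)
        (by rw [hj'v]; exact force_adj hF h)
        (fun hmem => target_not_mem hF h (expand_mono (by omega) hmem))
        (wc_mono (expand_mono (by omega)) hconn)
      have : v ∈ expand B F (k-1) :=
        expand_mono (show j' + 1 ≤ k - 1 by omega)
          (by rw [hv]; exact lastVert_mem_expand hF hb (j'+1))
      exact target_not_mem hF h this
    · -- u is not in the bundle : infinite descent via IH
      have huB : u ∉ B := fun hu => hQ (B_subset_bundle hu)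
      obtain ⟨t', ht'1, ht'2, u₂, hu₂⟩ := mem_expand_forced hF (source_mem hF h) huB
      exfalso
      apply hQ
      apply IH t' (by omega) u₂ u hu₂
      · exact fun hm => hx (expand_mono (by omega) hm)
      · refine wc_tail (wc_mono (expand_mono (by omega)) hconn)
          (force_adj hF h).symm
          (fun hm => target_not_mem hF h (expand_mono (by omega) hm))
          (target_not_mem hF hu₂)

/-- Lemma B: a blue vertex outside the tail adjacent to a white vertex
connected to `x` must be a past path vertex whose move forced that neighbor. -/
lemma lem_blue {s : ℕ} (hs1 : 1 ≤ s) (hsK : s ≤ K) (hx : x ∉ expand B F (s-1))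
    {z y : V} (hz : z ∈ expand B F (s-1)) (hzT : z ∉ Tail G B F x K s)
    (hadj : G.Adj z y) (hyE : y ∉ expand B F (s-1))
    (hyc : whiteConn G Set.univ (expand B F (s-1)) x y) :
    ∃ b' ∈ B, ∃ j, j + 1 ≤ K ∧ lastVert G B F x b' (j+1) = y ∧
      lastVert G B F x b' (j+1) ≠ lastVert G B F x b' j ∧ lastVert G B F x b' j = z := by
  by_cases hQ : z ∈ bundle G B F x K
  · obtain ⟨b', hb', j₀, hj₀K, hej₀⟩ := hQ
    have hj₀s : j₀ ≤ s := by
      by_contra hgt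
      exact hzT ⟨b', hb', j₀, by omega, hj₀K, hej₀⟩
    have hcs : lastVert G B F x b' s ≠ z := by
      intro hh
      exact hzT ⟨b', hb', s, le_refl _, hsK, hh⟩
    obtain ⟨j, hjc, hjv, hjne⟩ := last_app (G := G) hj₀s hej₀ hcs
    have hmv : lastVert G B F x b' (j+1) ≠ lastVert G B F x b' j := by
      rw [hjv]; exact hjne
    have hy := move_uniq hF hb' hmv (z := y)
      (by rw [hjv]; exact hadj)
      (fun hmem => hyE (expand_mono (by omega) hmem))
      (wc_mono (expand_mono (by omega)) hyc)
    exact ⟨b', hb', j, by omega, hy.symm, hmv, hjv⟩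
  · exfalso
    have hzB : z ∉ B := fun hz' => hQ (B_subset_bundle hz')
    obtain ⟨t', ht'1, ht'2, u₂, hu₂⟩ := mem_expand_forced hF hz hzB
    apply hQ
    apply lemA hF t' u₂ z hu₂
    · exact fun hm => hx (expand_mono (by omega) hm)
    · refine wc_tail (wc_mono (expand_mono (by omega)) hyc) hadj.symm
        (fun hm => hyE (expand_mono (by omega) hm))
        (target_not_mem hF hu₂)

end chron
end BundleProof
namespace BundleProof
open ZF

variable {V : Type*} [Fintype V] [DecidableEq V]
variable {G : SimpleGraph V} {B : Set V} {K : ℕ} {F : ℕ → Set (V × V)} {x : V}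

section chron
variable (hF : RelaxedChron (PSDValid G Set.univ) Set.univ B K F)
include hF

/-- The crux: uniqueness for a reversed bundle force. -/
lemma crux {b : V} (hb : b ∈ B) {s : ℕ} (hs1 : 1 ≤ s) (hsK : s ≤ K)
    (hmv : lastVert G B F x b s ≠ lastVert G B F x b (s-1)) {w : V}
    (hadj : G.Adj (lastVert G B F x b s) w) (hwT : w ∉ Tail G B F x K s)
    (hconn : whiteConn G Set.univ (Tail G B F x K s) (lastVert G B F x b (s-1)) w) :
    w = lastVert G B F x b (s-1) := by
  obtain ⟨hforce, hx, hxq⟩ := lastVert_fresh_force hF hs1 hmv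
  have hpE : lastVert G B F x b (s-1) ∈ expand B F (s-1) :=
    lastVert_mem_expand hF hb (s-1)
  have hqE : lastVert G B F x b s ∉ expand B F (s-1) := target_not_mem hF hforce
  have hpT := source_not_tail (K := K) hF hb hs1 hmv
  by_contra hne
  have hQnot : ∀ y, y ∉ expand B F (s-1) → y ∉ Tail G B F x K s →
      y ∉ bundle G B F x K :=
    fun y h1 h2 hQ => (bundle_cases hF hQ s).elim h1 h2
  have base : w ∉ expand B F (s-1) ∧
      whiteConn G Set.univ (expand B F (s-1)) x w ∧ w ∉ bundle G B F x K := by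
    by_cases hwE : w ∈ expand B F (s-1)
    · exfalso
      obtain ⟨b', hb', j, hjK, hej1, hmv', hej0⟩ :=
        lem_blue hF hs1 hsK hx hwE hwT hadj.symm hqE hxq
      obtain ⟨hbb, hsj⟩ := fresh_unique hF s b b' (j+1) hb hb'
        (Or.inr hmv) (Or.inr (by simpa using hmv')) hej1.symm
      subst hbb
      apply hne
      rw [show s - 1 = j by omega, hej0]
    · exact ⟨hwE, wc_tail hxq hadj hqE hwE, hQnot w hwE hwT⟩
  have step : ∀ y z, (y ∉ expand B F (s-1) ∧
      whiteConn G Set.univ (expand B F (s-1)) x y ∧ y ∉ bundle G B F x K) →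
      G.Adj y z → z ∉ Tail G B F x K s →
      z ∉ expand B F (s-1) ∧
        whiteConn G Set.univ (expand B F (s-1)) x z ∧ z ∉ bundle G B F x K := by
    intro y z hy hadj2 hzT
    by_cases hzE : z ∈ expand B F (s-1)
    · exfalso
      obtain ⟨b', hb', j, hjK, hej1, -, -⟩ :=
        lem_blue hF hs1 hsK hx hzE hzT hadj2.symm hy.1 hy.2.1
      exact hy.2.2 (by rw [← hej1]; exact mem_bundle_of_lastVert hb' (by omega))
    · exact ⟨hzE, wc_tail hy.2.1 hadj2 hy.1 hzE, hQnot z hzE hzT⟩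
  have main : ∀ y, whiteConn G Set.univ (Tail G B F x K s) w y →
      (y ∉ expand B F (s-1) ∧
        whiteConn G Set.univ (expand B F (s-1)) x y ∧ y ∉ bundle G B F x K) := by
    intro y hy
    induction hy with
    | refl => exact base
    | tail h1 h2 ih => exact step _ _ ih h2.1 h2.2.2.2.2
  exact (main _ (wc_symm hconn)).1 hpE

end chron
end BundleProof
namespace BundleProof
open ZF

variable {V : Type*} [Fintype V] [DecidableEq V]
variable {G : SimpleGraph V} {B : Set V} {K : ℕ} {F : ℕ → Set (V × V)} {x : V}

/-- the reversed/preserved chronology -/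
def revF (F : ℕ → Set (V × V)) (Q : Set V) (K : ℕ) : ℕ → Set (V × V) := fun t =>
  if 1 ≤ t ∧ t ≤ K then {p | (p.2, p.1) ∈ F (K + 1 - t) ∧ p.1 ∈ Q ∧ p.2 ∈ Q}
  else if K + 1 ≤ t ∧ t ≤ 2 * K then {p | p ∈ F (t - K) ∧ (p.1 ∉ Q ∨ p.2 ∉ Q)}
  else ∅

/-- targets outside the bundle forced by time `r` -/
def NB (F : ℕ → Set (V × V)) (Q : Set V) (r : ℕ) : Set V :=
  {v | ∃ k, 1 ≤ k ∧ k ≤ r ∧ (∃ u, (u, v) ∈ F k) ∧ v ∉ Q}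

lemma revF_mem1 {Q : Set V} {t : ℕ} (h1 : 1 ≤ t) (h2 : t ≤ K) {p : V × V} :
    p ∈ revF F Q K t ↔ ((p.2, p.1) ∈ F (K + 1 - t) ∧ p.1 ∈ Q ∧ p.2 ∈ Q) := by
  simp only [revF, if_pos (And.intro h1 h2)]; rfl

lemma revF_mem2 {Q : Set V} {t : ℕ} (h1 : K + 1 ≤ t) (h2 : t ≤ 2 * K) {p : V × V} :
    p ∈ revF F Q K t ↔ (p ∈ F (t - K) ∧ (p.1 ∉ Q ∨ p.2 ∉ Q)) := by
  have hn : ¬(1 ≤ t ∧ t ≤ K) := by omega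
  simp only [revF, if_neg hn, if_pos (And.intro h1 h2)]; rfl

lemma revF_empty {Q : Set V} {t : ℕ} (h1 : ¬(1 ≤ t ∧ t ≤ K)) (h2 : ¬(K + 1 ≤ t ∧ t ≤ 2 * K)) :
    revF F Q K t = ∅ := by
  simp only [revF, if_neg h1, if_neg h2]

lemma NB_mono {Q : Set V} {r r' : ℕ} (h : r ≤ r') : NB F Q r ⊆ NB F Q r' := by
  rintro v ⟨k, h1, h2, h3, h4⟩; exact ⟨k, h1, by omega, h3, h4⟩

section chron
variable (hF : RelaxedChron (PSDValid G Set.univ) Set.univ B K F)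
include hF

lemma terminus_eq :
    terminus (bundle G B F x K) (restrictF F (bundle G B F x K)) K = Tail G B F x K K := by
  ext v
  constructor
  · rintro ⟨⟨b, hb, j, hjK, hej⟩, hT⟩
    refine ⟨b, hb, K, le_refl _, le_refl _, ?_⟩
    by_contra hc
    obtain ⟨j', hj'K, hj'v, hj'ne⟩ := last_app (G := G) hjK hej hc
    have hmv : lastVert G B F x b (j'+1) ≠ lastVert G B F x b j' := by
      rw [hj'v]; exact hj'ne
    obtain ⟨hforce, -, -⟩ := lastVert_move hmv
    rw [hj'v] at hforce
    exact hT (lastVert G B F x b (j'+1))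
      ⟨j'+1, by omega, hj'K, hforce,
        ⟨b, hb, j, hjK, hej⟩, mem_bundle_of_lastVert hb hj'K⟩
  · rintro ⟨b, hb, j, hKj, hjK, hej⟩
    have hjeq : j = K := by omega
    subst hjeq
    refine ⟨⟨b, hb, j, le_refl _, hej⟩, ?_⟩
    rintro u ⟨k, hk1, hkK, hmem, -, huQ⟩
    obtain ⟨b', hb', hA, hB, hmv⟩ := lemU hF hmem huQ
    obtain ⟨f, hfle, hfv, hffresh⟩ := exists_fresh_min (G := G)
      (b := b) (j := j) (v := v) hej
    obtain ⟨f', hfle', hfv', hffresh'⟩ := exists_fresh_min (G := G)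
      (b := b') (j := k-1) (v := v) hA
    obtain ⟨hbb, -⟩ := fresh_unique hF f b b' f' hb hb' hffresh hffresh'
      (by rw [hfv, hfv'])
    subst hbb
    have hnr := lastVert_no_return hF hb (k := k - 1)
      (by rw [Nat.sub_add_cancel hk1]; exact hmv) j
      (by omega)
    rw [hA] at hnr
    exact hnr hej

lemma expand_phase1 : ∀ t, t ≤ K →
    expand (Tail G B F x K K) (revF F (bundle G B F x K) K) t = Tail G B F x K (K - t) := by
  intro t
  induction t with
  | zero => intro _; rw [expand_zero, Nat.sub_zero]
  | succ t ih =>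
    intro ht
    have hs1 : 1 ≤ K - t := by omega
    have hsK : K - t ≤ K := by omega
    rw [expand_succ, ih (by omega)]
    ext v
    constructor
    · rintro (⟨b, hb, j, hjs, hjK, hej⟩ | ⟨u, hu⟩)
      · exact ⟨b, hb, j, by omega, hjK, hej⟩
      · rw [revF_mem1 (by omega) (by omega)] at hu
        obtain ⟨hmem, huQ, hvQ⟩ := hu
        rw [show K + 1 - (t + 1) = K - t from by omega] at hmem
        obtain ⟨b', hb', hA, hB, hmv⟩ := lemU hF hmem huQ
        exact ⟨b', hb', K - t - 1, by omega, by omega, hA⟩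
    · rintro ⟨b, hb, j, hjs, hjK, hej⟩
      by_cases hjs' : K - t ≤ j
      · exact Or.inl ⟨b, hb, j, hjs', hjK, hej⟩
      · have hj : j = K - t - 1 := by omega
        by_cases hmvb : lastVert G B F x b (K - t) = lastVert G B F x b (K - t - 1)
        · refine Or.inl ⟨b, hb, K - t, le_refl _, hsK, ?_⟩
          rw [hmvb, show K - t - 1 = j from hj.symm, hej]
        · refine Or.inr ⟨lastVert G B F x b (K - t), ?_⟩
          rw [revF_mem1 (by omega) (by omega)]
          obtain ⟨hforce, -, -⟩ := lastVert_fresh_force hF hs1 hmvb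
          refine ⟨?_, mem_bundle_of_lastVert hb hsK, ?_⟩
          · rw [show K + 1 - (t + 1) = K - t from by omega]
            show (v, lastVert G B F x b (K - t)) ∈ F (K - t)
            have hveq : v = lastVert G B F x b (K - t - 1) := by rw [← hej, hj]
            rw [hveq]
            exact hforce
          · show v ∈ bundle G B F x K
            rw [← hej]
            exact mem_bundle_of_lastVert hb hjK

lemma expand_phase2 : ∀ r, r ≤ K →
    expand (Tail G B F x K K) (revF F (bundle G B F x K) K) (K + r) =
      bundle G B F x K ∪ NB F (bundle G B F x K) r := by
  intro r
  induction r with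
  | zero =>
    intro _
    rw [Nat.add_zero, expand_phase1 hF K (le_refl _), Nat.sub_self]
    rw [← bundle_eq_Tail0]
    ext v
    constructor
    · exact fun h => Or.inl h
    · rintro (h | ⟨k, h1, h2, -, -⟩)
      · exact h
      · omega
  | succ r ih =>
    intro hr
    rw [show K + (r + 1) = (K + r) + 1 from rfl, expand_succ, ih (by omega)]
    ext v
    constructor
    · rintro ((h | h) | ⟨u, hu⟩)
      · exact Or.inl h
      · exact Or.inr (NB_mono (by omega) h)
      · rw [revF_mem2 (by omega) (by omega)] at hu
        obtain ⟨hmem, hor⟩ := hu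
        rw [show K + r + 1 - K = r + 1 from by omega] at hmem
        by_cases hvQ : v ∈ bundle G B F x K
        · exact Or.inl hvQ
        · exact Or.inr ⟨r + 1, by omega, le_refl _, ⟨u, hmem⟩, hvQ⟩
    · rintro (h | ⟨k, h1, h2, ⟨u, hu⟩, hvQ⟩)
      · exact Or.inl (Or.inl h)
      · by_cases hk : k ≤ r
        · exact Or.inl (Or.inr ⟨k, h1, hk, ⟨u, hu⟩, hvQ⟩)
        · have : k = r + 1 := by omega
          subst this
          refine Or.inr ⟨u, ?_⟩
          rw [revF_mem2 (by omega) (by omega),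
            show K + r + 1 - K = r + 1 from by omega]
          exact ⟨hu, Or.inr hvQ⟩

lemma expand_subset_QNB : ∀ r, expand B F r ⊆ bundle G B F x K ∪ NB F (bundle G B F x K) r := by
  intro r
  induction r with
  | zero => exact fun v hv => Or.inl (B_subset_bundle hv)
  | succ n ih =>
    rw [expand_succ]
    rintro v (hv | ⟨u, hu⟩)
    · rcases ih hv with h | h
      · exact Or.inl h
      · exact Or.inr (NB_mono (by omega) h)
    · by_cases hvQ : v ∈ bundle G B F x K
      · exact Or.inl hvQ
      · exact Or.inr ⟨n + 1, by omega, le_refl _, ⟨u, hu⟩, hvQ⟩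

end chron
end BundleProof
namespace BundleProof
open ZF

variable {V : Type*} [Fintype V] [DecidableEq V]
variable {G : SimpleGraph V} {B : Set V} {K : ℕ} {F : ℕ → Set (V × V)} {x : V}

lemma psd_mono {B1 B2 : Set V} (h : B1 ⊆ B2) {u v : V}
    (hv : PSDValid G Set.univ B1 u v) : v ∈ B2 ∨ PSDValid G Set.univ B2 u v := by
  by_cases hvB : v ∈ B2
  · exact Or.inl hvB
  · refine Or.inr ⟨trivial, trivial, h hv.2.2.1, hvB, hv.2.2.2.2.1, ?_⟩
    intro w _ hadj hw hc
    exact hv.2.2.2.2.2 w trivial hadj (fun hmem => hw (h hmem)) (wc_mono h hc)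

lemma chron_forcing {B0 : Set V} {K0 : ℕ} {F0 : ℕ → Set (V × V)}
    (h : RelaxedChron (PSDValid G Set.univ) Set.univ B0 K0 F0) :
    IsForcingSet (PSDValid G Set.univ) Set.univ B0 := by
  refine ⟨fun _ _ => trivial, K0, ?_⟩
  have iterm : ∀ t, ZF.iter (PSDValid G Set.univ) B0 t ⊆
      ZF.iter (PSDValid G Set.univ) B0 (t+1) := by
    intro t
    show _ ⊆ (ZF.step (PSDValid G Set.univ))^[t+1] B0
    rw [Function.iterate_succ_apply']
    exact Set.subset_union_left
  have main : ∀ t, expand B0 F0 t ⊆ ZF.iter (PSDValid G Set.univ) B0 t := by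
    intro t
    induction t with
    | zero => exact fun v hv => hv
    | succ n ih =>
      rw [expand_succ]
      rintro v (hv | ⟨u, hu⟩)
      · exact iterm n (ih hv)
      · by_cases hn : n < K0
        · have hval := h.forcesValid n hn u v hu
          rcases psd_mono ih hval with hmem | hval2
          · exact iterm n hmem
          · show v ∈ (ZF.step (PSDValid G Set.univ))^[n+1] B0
            rw [Function.iterate_succ_apply']
            exact Or.inr ⟨u, hval2⟩
        · exfalso
          rw [h.bound (n+1) (by omega)] at hu
          exact hu
  exact fun v _ => main K0 (h.complete (Set.mem_univ v))

section chron
variable (hF : RelaxedChron (PSDValid G Set.univ) Set.univ B K F)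
include hF

/-- the reversed/preserved chronology is a relaxed chronology of PSD forces
for the tail `Tail K K`. -/
lemma revF_chron :
    RelaxedChron (PSDValid G Set.univ) Set.univ (Tail G B F x K K) (2 * K)
      (revF F (bundle G B F x K) K) := by
  constructor
  · exact fun _ _ => trivial
  · exact revF_empty (by omega) (by omega)
  · intro k hk
    exact revF_empty (by omega) (by omega)
  · -- forcesValid
    intro k hk u v huv
    by_cases hk1 : k < K
    · -- phase 1 : reversed bundle forces
      rw [revF_mem1 (by omega) (by omega)] at huv
      obtain ⟨hmem, huQ, hvQ⟩ := huv
      rw [show K + 1 - (k + 1) = K - k from by omega] at hmem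
      have hs1 : 1 ≤ K - k := by omega
      have hsK : K - k ≤ K := by omega
      obtain ⟨b, hb, hA, hB, hmv⟩ := lemU hF hmem huQ
      rw [show K - k - 1 = K - k - 1 from rfl] at hA
      rw [expand_phase1 hF k (by omega)]
      have hA' : lastVert G B F x b (K - k - 1) = v := hA
      have hB' : lastVert G B F x b (K - k) = u := hB
      refine ⟨trivial, trivial, ?_, ?_, ?_, ?_⟩
      · exact ⟨b, hb, K - k, le_refl _, hsK, hB'⟩
      · rw [← hA']
        exact source_not_tail hF hb hs1 hmv
      · exact (force_adj hF hmem).symm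
      · intro w _ hadj hw hc
        rw [← hA']
        refine crux hF hb hs1 hsK hmv ?_ hw ?_
        · rw [hB']; exact hadj
        · rw [hA']; exact hc
    · -- phase 2 : preserved forces
      have hkK : K ≤ k := by omega
      rw [revF_mem2 (by omega) (by omega)] at huv
      obtain ⟨hmem, hor⟩ := huv
      rw [show k + 1 - K = (k - K) + 1 from by omega] at hmem
      set r := k - K with hr
      have hrK : r < K := by omega
      have hmem' : (u, v) ∈ F (r + 1) := hmem
      have hval := mem_F_valid hF hmem'
      rw [Nat.add_sub_cancel] at hval
      have hDeq : expand (Tail G B F x K K) (revF F (bundle G B F x K) K) k =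
          bundle G B F x K ∪ NB F (bundle G B F x K) r := by
        rw [show k = K + r from by omega]
        exact expand_phase2 hF r (by omega)
      rw [hDeq]
      have hvQ : v ∉ bundle G B F x K := by
        intro hvQ
        obtain ⟨b, hb, hA, hB, -⟩ := lemU hF hmem' hvQ
        rw [Nat.add_sub_cancel] at hA
        have huQ : u ∈ bundle G B F x K := by
          rw [← hA]; exact mem_bundle_of_lastVert hb (by omega)
        rcases hor with h | h
        · exact h huQ
        · exact h hvQ
      have hsub : expand B F r ⊆ bundle G B F x K ∪ NB F (bundle G B F x K) r :=
        expand_subset_QNB hF r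
      refine ⟨trivial, trivial, hsub hval.2.2.1, ?_, hval.2.2.2.2.1, ?_⟩
      · rintro (h | ⟨k₀, hk₀1, hk₀r, ⟨u₀, hu₀⟩, -⟩)
        · exact hvQ h
        · obtain ⟨hkk, -⟩ := force_time_unique hF hmem' hu₀
          omega
      · intro w _ hadj hw hc
        have hwE : w ∉ expand B F r := fun hmem2 => hw (hsub hmem2)
        have := force_uniq hF hmem' w hadj
        rw [Nat.add_sub_cancel] at this
        exact this hwE (wc_mono hsub hc)
  · -- uniqueForcer
    intro k u₁ u₂ v h1 h2
    by_cases hg1 : 1 ≤ k ∧ k ≤ K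
    · rw [revF_mem1 hg1.1 hg1.2] at h1 h2
      obtain ⟨m1, q1, -⟩ := h1
      obtain ⟨m2, q2, -⟩ := h2
      obtain ⟨b₁, hb₁, hA₁, hB₁, -⟩ := lemU hF m1 q1
      obtain ⟨b₂, hb₂, hA₂, hB₂, -⟩ := lemU hF m2 q2
      obtain ⟨f₁, hf₁le, hf₁v, hf₁fr⟩ := exists_fresh_min (G := G) hA₁
      obtain ⟨f₂, hf₂le, hf₂v, hf₂fr⟩ := exists_fresh_min (G := G) hA₂
      obtain ⟨hbb, -⟩ := fresh_unique hF f₁ b₁ b₂ f₂ hb₁ hb₂ hf₁fr hf₂fr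
        (by rw [hf₁v, hf₂v])
      subst hbb
      exact hB₁.symm.trans hB₂
    · by_cases hg2 : K + 1 ≤ k ∧ k ≤ 2 * K
      · rw [revF_mem2 hg2.1 hg2.2] at h1 h2
        exact hF.uniqueForcer (k - K) u₁ u₂ v h1.1 h2.1
      · rw [revF_empty hg1 hg2] at h1
        exact absurd h1 (Set.notMem_empty _)
  · -- complete
    intro v _
    rw [show 2 * K = K + K from by omega, expand_phase2 hF K (le_refl _)]
    exact expand_subset_QNB hF K (hF.complete (Set.mem_univ v))

/-- the set of forces of the reversed chronology -/
lemma revF_forcesOf :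
    forcesOf (revF F (bundle G B F x K) K) (2 * K) =
      {p : V × V | (p.2, p.1) ∈ forcesOf F K ∧
          p.1 ∈ bundle G B F x K ∧ p.2 ∈ bundle G B F x K} ∪
      {p ∈ forcesOf F K |
          p.1 ∉ bundle G B F x K ∨ p.2 ∉ bundle G B F x K} := by
  ext p
  constructor
  · rintro ⟨t, ht1, ht2, hp⟩
    by_cases hg1 : t ≤ K
    · rw [revF_mem1 ht1 hg1] at hp
      exact Or.inl ⟨⟨K + 1 - t, by omega, by omega, hp.1⟩, hp.2.1, hp.2.2⟩
    · rw [revF_mem2 (by omega) ht2] at hp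
      exact Or.inr ⟨⟨t - K, by omega, by omega, hp.1⟩, hp.2⟩
  · rintro (⟨⟨k, hk1, hk2, hp⟩, h1Q, h2Q⟩ | ⟨⟨k, hk1, hk2, hp⟩, hor⟩)
    · refine ⟨K + 1 - k, by omega, by omega, ?_⟩
      rw [revF_mem1 (by omega) (by omega), show K + 1 - (K + 1 - k) = k from by omega]
      exact ⟨hp, h1Q, h2Q⟩
    · refine ⟨K + k, by omega, by omega, ?_⟩
      rw [revF_mem2 (by omega) (by omega), show K + k - K = k from by omega]
      exact ⟨hp, hor⟩

end chron
end BundleProof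

/-- The terminus of the restriction of a relaxed chronology of PSD forces to the path
bundle induced by a vertex `x` is a PSD forcing set of `G`, and a relaxed chronology of
PSD forces for it is obtained by reversing the forces between vertices of the bundle and
preserving all remaining forces. -/
theorem bundle_terminus_psd {V : Type*} [Fintype V] [DecidableEq V]
    (G : SimpleGraph V) (B : Set V) (K : ℕ) (F : ℕ → Set (V × V))
    (hB : ZF.IsForcingSet (ZF.PSDValid G Set.univ) Set.univ B)
    (hF : ZF.RelaxedChron (ZF.PSDValid G Set.univ) Set.univ B K F) (x : V) :
    ZF.IsForcingSet (ZF.PSDValid G Set.univ) Set.univ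
      (ZF.terminus (ZF.bundle G B F x K) (ZF.restrictF F (ZF.bundle G B F x K)) K) ∧
    ∃ (K' : ℕ) (F' : ℕ → Set (V × V)),
      ZF.RelaxedChron (ZF.PSDValid G Set.univ) Set.univ
        (ZF.terminus (ZF.bundle G B F x K) (ZF.restrictF F (ZF.bundle G B F x K)) K)
        K' F' ∧
      ZF.forcesOf F' K' =
        {p : V × V | (p.2, p.1) ∈ ZF.forcesOf F K ∧
            p.1 ∈ ZF.bundle G B F x K ∧ p.2 ∈ ZF.bundle G B F x K} ∪
        {p ∈ ZF.forcesOf F K |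
            p.1 ∉ ZF.bundle G B F x K ∨ p.2 ∉ ZF.bundle G B F x K} := by
  have hteq := BundleProof.terminus_eq (x := x) hF
  constructor
  · rw [hteq]
    exact BundleProof.chron_forcing (BundleProof.revF_chron hF)
  · refine ⟨2 * K, BundleProof.revF F (ZF.bundle G B F x K) K, ?_,
      BundleProof.revF_forcesOf hF⟩
    rw [hteq]
    exact BundleProof.revF_chron hF
end
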